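/- arXiv:1908.03588 — 11 statements merged into one kernel-verified Lean document; each statement's English description precedes it below -/
import Mathlib

section
/- Let H be a finite simple graph that is 2-connected, and suppose each edge of H is colored either red or blue in such a way that at least one edge is red and at least one edge is blue. Then H contains a simple cycle that contains at least one red edge and at least one blue edge. -/
open SimpleGraph

/-- Along a walk containing both a red and a blue edge, there are two incident
edges of different colors. -/
lemma exists_incident_bicolor {V : Type} (H : SimpleGraph V) (c : Sym2 V → Bool)
    {a b : V} (p : H.Walk a b)
    (hr : ∃ e ∈ p.edges, c e = true) (hb : ∃ e ∈ p.edges, c e = false) :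
    ∃ v u w : V, H.Adj v u ∧ H.Adj v w ∧ c s(v, u) = true ∧ c s(v, w) = false := by
  induction p with
  | nil => simp at hr
  | @cons x y b h q ih =>
    cases q with
    | nil =>
      obtain ⟨e, he, hce⟩ := hr
      obtain ⟨f, hf, hcf⟩ := hb
      simp only [Walk.edges_cons, Walk.edges_nil, List.mem_singleton] at he hf
      subst he; subst hf; simp [hce] at hcf
    | @cons y z b h' q' =>
      by_cases hcol : c s(x, y) = c s(y, z)
      · -- same color: push into the tail
        cases hc1 : c s(x, y) with
        | true =>
          obtain ⟨f, hf, hcf⟩ := hb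
          simp only [Walk.edges_cons, List.mem_cons] at hf
          rcases hf with hf | hf
          · rw [hf] at hcf; rw [hc1] at hcf; simp at hcf
          · exact ih ⟨s(y, z), by simp, by rw [← hcol, hc1]⟩ ⟨f, by rw [Walk.edges_cons, List.mem_cons]; exact hf, hcf⟩
        | false =>
          obtain ⟨e, he, hce⟩ := hr
          simp only [Walk.edges_cons, List.mem_cons] at he
          rcases he with he | he
          · rw [he] at hce; rw [hc1] at hce; simp at hce
          · exact ih ⟨e, by rw [Walk.edges_cons, List.mem_cons]; exact he, hce⟩ ⟨s(y, z), by simp, by rw [← hcol, hc1]⟩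
      · -- colors differ at the shared vertex y
        cases hc1 : c s(x, y) with
        | true =>
          refine ⟨y, x, z, h.symm, h', ?_, ?_⟩
          · rwa [Sym2.eq_swap]
          · rw [hc1] at hcol
            cases hc2 : c s(y, z) with
            | true => exact absurd hc2.symm hcol
            | false => rfl
        | false =>
          refine ⟨y, z, x, h', h.symm, ?_, ?_⟩
          · rw [hc1] at hcol
            cases hc2 : c s(y, z) with
            | true => rfl
            | false => exact absurd hc2.symm hcol
          · rwa [Sym2.eq_swap]

/-- Let `H` be a finite simple graph that is 2-connected (connected, and
remains connected after deleting any single vertex), and suppose each edge of `H` is colored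
red (`true`) or blue (`false`) such that at least one edge is red and at least one edge is
blue. Then `H` contains a simple cycle containing at least one red edge and at least one
blue edge. -/
theorem stmt_0 {V : Type} [Fintype V] [DecidableEq V]
    (H : SimpleGraph V)
    (hconn : H.Connected)
    (h2conn : ∀ v : V, (H.induce ({v}ᶜ : Set V)).Connected)
    (c : Sym2 V → Bool)
    (hred : ∃ e ∈ H.edgeSet, c e = true)
    (hblue : ∃ e ∈ H.edgeSet, c e = false) :
    ∃ (v : V) (p : H.Walk v v), p.IsCycle ∧
      (∃ e ∈ p.edges, c e = true) ∧ (∃ e ∈ p.edges, c e = false) := by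
  classical
  -- Step 1: find incident edges of different colors
  obtain ⟨v, u, w, hvu, hvw, hcu, hcw⟩ : ∃ v u w : V, H.Adj v u ∧ H.Adj v w ∧
      c s(v, u) = true ∧ c s(v, w) = false := by
    obtain ⟨e, heE, hce⟩ := hred
    obtain ⟨f, hfE, hcf⟩ := hblue
    induction e using Sym2.inductionOn with | hf a b =>
    induction f using Sym2.inductionOn with | hf x y =>
    rw [mem_edgeSet] at heE hfE
    obtain ⟨q⟩ := hconn b x
    refine exists_incident_bicolor H c
      (Walk.cons heE (q.concat hfE)) ⟨s(a, b), by simp, hce⟩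
      ⟨s(x, y), ?_, hcf⟩
    simp [Walk.edges_concat]
  have huw : u ≠ w := by
    rintro rfl; rw [hcu] at hcw; exact absurd hcw (by simp)
  have huv : u ≠ v := hvu.ne'
  have hwv : w ≠ v := hvw.ne'
  -- Step 2: path from u to w avoiding v
  have hu : u ∈ ({v}ᶜ : Set V) := by simp [huv]
  have hw : w ∈ ({v}ᶜ : Set V) := by simp [hwv]
  obtain ⟨q0⟩ := (h2conn v) ⟨u, hu⟩ ⟨w, hw⟩
  let q1 := q0.toPath.val
  have hq1 : q1.IsPath := q0.toPath.prop
  let emb := SimpleGraph.Embedding.induce ({v}ᶜ : Set V) (G := H)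
  let p : H.Walk u w := q1.map emb.toHom
  have hp : p.IsPath := Walk.map_isPath_of_injective emb.injective hq1
  have hvp : v ∉ p.support := by
    intro hv
    change v ∈ (q1.map emb.toHom).support at hv
    rw [Walk.support_map, List.mem_map] at hv
    obtain ⟨⟨z, hz⟩, _, hz2⟩ := hv
    exact hz (by simpa using (show z = v from hz2))
  -- Step 3: build the cycle v → u → ... → w → v
  have hwvadj : H.Adj w v := hvw.symm
  let p2 : H.Walk u v := p.concat hwvadj
  have hp2 : p2.IsPath := by
    rw [← Walk.isPath_reverse_iff]
    show ((p.concat hwvadj).reverse).IsPath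
    rw [Walk.reverse_concat]
    exact (hp.reverse).cons (by simpa using hvp)
  have hnotin : s(v, u) ∉ p2.edges := by
    intro hmem
    rw [Walk.edges_concat, List.concat_eq_append, List.mem_append] at hmem
    rcases hmem with hmem | hmem
    · exact hvp (Walk.fst_mem_support_of_mem_edges p hmem)
    · simp only [List.mem_singleton, Sym2.eq_iff] at hmem
      rcases hmem with ⟨h1, h2⟩ | ⟨h1, h2⟩
      · exact huv h2
      · exact huw h2
  refine ⟨v, Walk.cons hvu p2, ?_, ⟨s(v, u), by simp, hcu⟩, ⟨s(w, v), ?_, by rwa [Sym2.eq_swap]⟩⟩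
  · exact (Walk.cons_isCycle_iff p2 hvu).mpr ⟨hp2, hnotin⟩
  · simp [p2, Walk.edges_concat]
end

section
/- Let H be a finite simple graph that is 2-connected, and suppose each edge of H is colored either red or blue in such a way that every simple cycle of H is monochromatic (all edges of the cycle have the same color). Then for every vertex v of H, all edges incident to v have the same color. -/
/-- Let `H` be a finite simple graph that is 2-connected, and suppose each
edge of `H` is colored red (`true`) or blue (`false`) such that every simple cycle of `H` is
monochromatic. Then for every vertex `v`, all edges of `H` incident to `v` have the same
color. -/
theorem stmt_1 {V : Type} [Fintype V] [DecidableEq V]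
    (H : SimpleGraph V)
    (hconn : H.Connected)
    (h2conn : ∀ v : V, (H.induce ({v}ᶜ : Set V)).Connected)
    (c : Sym2 V → Bool)
    (hmono : ∀ (v : V) (p : H.Walk v v), p.IsCycle →
      ∀ e₁ ∈ p.edges, ∀ e₂ ∈ p.edges, c e₁ = c e₂) :
    ∀ (v : V), ∀ e₁ ∈ H.edgeSet, ∀ e₂ ∈ H.edgeSet,
      v ∈ e₁ → v ∈ e₂ → c e₁ = c e₂ := by
  intro v e₁ he₁ e₂ he₂ hv1 hv2
  obtain ⟨a, rfl⟩ := Sym2.mem_iff_exists.mp hv1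
  obtain ⟨b, rfl⟩ := Sym2.mem_iff_exists.mp hv2
  rw [SimpleGraph.mem_edgeSet] at he₁ he₂
  by_cases hab : a = b
  · subst hab; rfl
  -- a and b are in the complement of {v}
  have hav : a ≠ v := he₁.ne'
  have hbv : b ≠ v := he₂.ne'
  -- get a walk from a to b in the induced graph on {v}ᶜ
  obtain ⟨w⟩ := (h2conn v).preconnected ⟨a, by simp [hav]⟩ ⟨b, by simp [hbv]⟩
  -- map it to H
  let w' : H.Walk a b := w.map (SimpleGraph.Embedding.induce ({v}ᶜ : Set V)).toHom
  have hvw' : v ∉ w'.support := by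
    show v ∉ (w.map (SimpleGraph.Embedding.induce ({v}ᶜ : Set V)).toHom).support
    rw [SimpleGraph.Walk.support_map, List.mem_map]
    rintro ⟨⟨x, hx⟩, -, h⟩
    exact hx (by simpa using h)
  -- take the underlying path
  let q : H.Walk a b := w'.bypass
  have hq : q.IsPath := w'.bypass_isPath
  have hvq : v ∉ q.support := fun h => hvw' (w'.support_bypass_subset h)
  -- build the cycle v → a → ... → b → v
  let p' : H.Walk a v := (SimpleGraph.Walk.cons he₂ q.reverse).reverse
  have hp' : p'.IsPath := by
    apply SimpleGraph.Walk.IsPath.reverse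
    rw [SimpleGraph.Walk.cons_isPath_iff]
    exact ⟨hq.reverse, by simpa using hvq⟩
  have hep' : p'.edges = (q.reverse.edges).reverse ++ [s(v, b)] := by
    simp [p', SimpleGraph.Walk.edges_reverse]
  have hva_not : s(v, a) ∉ p'.edges := by
    rw [hep']
    simp only [List.mem_append, List.mem_reverse, List.mem_singleton]
    rintro (h | h)
    · have := q.reverse.fst_mem_support_of_mem_edges h
      rw [SimpleGraph.Walk.support_reverse, List.mem_reverse] at this
      exact hvq this
    · rw [Sym2.eq_iff] at h
      rcases h with ⟨-, hab'⟩ | ⟨hvb, -⟩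
      · exact hab hab'
      · exact hbv hvb.symm
  let cyc : H.Walk v v := SimpleGraph.Walk.cons he₁ p'
  have hcyc : cyc.IsCycle := by
    rw [SimpleGraph.Walk.cons_isCycle_iff]
    exact ⟨hp', hva_not⟩
  have h1 : s(v, a) ∈ cyc.edges := by simp [cyc]
  have h2 : s(v, b) ∈ cyc.edges := by
    simp only [cyc, SimpleGraph.Walk.edges_cons, List.mem_cons]
    right; rw [hep']; simp
  exact hmono v cyc hcyc _ h1 _ h2
end

section
/- Let H be a finite simple graph that is 2-connected, and let F be a set of edges of H that is nonempty and a proper subset of the edge set of H. Then there exist a simple cycle C in H and a vertex v lying on C such that exactly one of the two edges of C incident to v belongs to F. -/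
/-- Along a walk, if the start touches an `F`-edge and the end touches a non-`F` edge of `H`,
then some vertex touches both an `F`-edge and a non-`F` edge. -/
lemma aux_switch {V : Type} {H : SimpleGraph V} {F : Set (Sym2 V)} :
    ∀ {x y : V} (w : H.Walk x y),
      (∃ a : V, H.Adj x a ∧ s(x, a) ∈ F) →
      (∃ b : V, H.Adj y b ∧ s(y, b) ∉ F) →
      ∃ (v a b : V), H.Adj v a ∧ H.Adj v b ∧ s(v, a) ∈ F ∧ s(v, b) ∉ F := by
  intro x y w
  induction w with
  | nil =>
    rintro ⟨a, ha, haF⟩ ⟨b, hb, hbF⟩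
    exact ⟨_, a, b, ha, hb, haF, hbF⟩
  | @cons u v' y h p ih =>
    rintro ⟨a, ha, haF⟩ hb
    by_cases hc : s(v', u) ∈ F
    · exact ih ⟨u, h.symm, hc⟩ hb
    · exact ⟨u, a, v', ha, h, haF, by rwa [Sym2.eq_swap] at hc⟩

/-- Let `H` be a finite simple graph that is 2-connected, and let `F` be a
nonempty proper subset of the edge set of `H`. Then there exist a simple cycle `p` in `H`
and a vertex `v` lying on `p` such that exactly one of the two edges of `p` incident to `v`
belongs to `F` (expressed as: there are two distinct edges of `p` incident to `v`, one in
`F` and one not in `F`; a simple cycle has exactly two edges at each of its vertices). -/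
theorem stmt_2 {V : Type} [Fintype V] [DecidableEq V]
    (H : SimpleGraph V)
    (hconn : H.Connected)
    (h2conn : ∀ v : V, (H.induce ({v}ᶜ : Set V)).Connected)
    (F : Set (Sym2 V)) (hFsub : F ⊆ H.edgeSet) (hFne : F.Nonempty)
    (hFproper : F ≠ H.edgeSet) :
    ∃ (u : V) (p : H.Walk u u), p.IsCycle ∧
      ∃ v ∈ p.support, ∃ e₁ e₂ : Sym2 V,
        e₁ ∈ p.edges ∧ e₂ ∈ p.edges ∧ e₁ ≠ e₂ ∧
        v ∈ e₁ ∧ v ∈ e₂ ∧ e₁ ∈ F ∧ e₂ ∉ F := by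
  classical
  -- get an edge in F and an edge not in F
  obtain ⟨e, heF⟩ := hFne
  obtain ⟨f, hfH, hfF⟩ : ∃ f, f ∈ H.edgeSet ∧ f ∉ F := by
    by_contra hcon
    push_neg at hcon
    exact hFproper (Set.Subset.antisymm hFsub hcon)
  induction e using Sym2.ind with | _ x a =>
  induction f using Sym2.ind with | _ y b =>
  have hxa : H.Adj x a := hFsub heF
  have hyb : H.Adj y b := hfH
  -- find a vertex v touching an F-edge and a non-F edge
  obtain ⟨v, u, w, hvu, hvw, huF, hwF⟩ :
      ∃ (v u w : V), H.Adj v u ∧ H.Adj v w ∧ s(v, u) ∈ F ∧ s(v, w) ∉ F :=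
    aux_switch ((hconn x y).some) ⟨a, hxa, heF⟩ ⟨b, hyb, hfF⟩
  have huw : u ≠ w := by rintro rfl; exact hwF huF
  have huv : (u : V) ∈ ({v}ᶜ : Set V) := by simp [hvu.ne']
  have hwv : (w : V) ∈ ({v}ᶜ : Set V) := by simp [hvw.ne']
  -- path from u to w avoiding v
  obtain ⟨W⟩ := (h2conn v) ⟨u, huv⟩ ⟨w, hwv⟩
  let P0 : H.Walk u w := W.map (SimpleGraph.Embedding.induce ({v}ᶜ : Set V)).toHom
  let P : H.Walk u w := P0.toPath
  have hPpath : P.IsPath := (P0.toPath).property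
  have hvP : v ∉ P.support := by
    intro hv
    have hv0 : v ∈ P0.support := P0.support_toPath_subset hv
    replace hv0 : v ∈ W.support.map (SimpleGraph.Embedding.induce (G := H) ({v}ᶜ : Set V)).toHom := by
      rw [← SimpleGraph.Walk.support_map]; exact hv0
    obtain ⟨z, _, hz⟩ := List.mem_map.mp hv0
    have hz2 : (z : V) ≠ v := z.2
    exact hz2 (by simpa using hz)
  -- build the cycle v → u → ... → w → v
  let p' : H.Walk u v := (SimpleGraph.Walk.cons hvw P.reverse).reverse
  have hp'path : p'.IsPath := by
    rw [SimpleGraph.Walk.isPath_reverse_iff]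
    exact ((SimpleGraph.Walk.isPath_reverse_iff P).mpr hPpath).cons
      (by rwa [SimpleGraph.Walk.support_reverse, List.mem_reverse])
  have hep' : p'.edges = (s(v, w) :: P.edges.reverse).reverse := by
    simp [p', SimpleGraph.Walk.edges_reverse]
  have hne : ¬ s(v, u) ∈ p'.edges := by
    intro hm
    rw [hep', List.mem_reverse, List.mem_cons, List.mem_reverse] at hm
    rcases hm with hm | hm
    · rw [Sym2.eq_iff] at hm
      rcases hm with ⟨h1, h2⟩ | ⟨h1, h2⟩
      · exact huw h2
      · exact hvu.ne' h2
    · exact hvP (SimpleGraph.Walk.fst_mem_support_of_mem_edges P hm)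
  have hcyc : (SimpleGraph.Walk.cons hvu p').IsCycle :=
    (SimpleGraph.Walk.cons_isCycle_iff p' hvu).mpr ⟨hp'path, hne⟩
  refine ⟨v, SimpleGraph.Walk.cons hvu p', hcyc, v, ?_,
    s(v, u), s(w, v), ?_, ?_, ?_, ?_, ?_, huF, by rwa [Sym2.eq_swap]⟩
  · simp
  · exact List.mem_cons_self
  · rw [SimpleGraph.Walk.edges_cons]
    refine List.mem_cons_of_mem _ ?_
    rw [hep', List.mem_reverse, Sym2.eq_swap]
    exact List.mem_cons_self
  · intro h
    rw [Sym2.eq_iff] at h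
    rcases h with ⟨h1, h2⟩ | ⟨h1, h2⟩
    · exact hvu.ne' h2
    · exact huw h2
  · simp
  · simp
end

section
/- For every c ∈ ℝⁿ there exists exactly one y ∈ ℝⁿ such that F_A(y) = c. In particular, for every w ∈ ℝ^m, the steady-state equation κ(y) + A γ(Aᵀ y) = −A w has a unique solution y ∈ ℝⁿ. -/
open MeasureTheory

private lemma auxStrong (ρ : ℝ) (k : ℝ → ℝ) (hm : Monotone fun s => k s - ρ * s) (a b : ℝ) :
    ρ * (a - b)^2 ≤ (k a - k b) * (a - b) := by
  rcases le_total a b with h | h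
  · have h2 : k a - ρ * a ≤ k b - ρ * b := hm h; nlinarith
  · have h2 : k b - ρ * b ≤ k a - ρ * a := hm h; nlinarith

private lemma auxInt (ρ : ℝ) (k : ℝ → ℝ) (hc : Continuous k)
    (hm : Monotone fun s => k s - ρ * s) (t : ℝ) :
    k 0 * t + ρ * t^2 / 2 ≤ ∫ s in (0:ℝ)..t, k s := by
  have hint : ∀ a b : ℝ, IntervalIntegrable k volume a b := fun a b => hc.intervalIntegrable a b
  have hlin : ∀ a b : ℝ, IntervalIntegrable (fun s => k 0 + ρ * s) volume a b :=
    fun a b => ((continuous_const.add (continuous_const.mul continuous_id)) :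
      Continuous (fun s : ℝ => k 0 + ρ * s)).intervalIntegrable a b
  have hval : ∀ t : ℝ, (∫ s in (0:ℝ)..t, (k 0 + ρ * s)) = k 0 * t + ρ * t^2 / 2 := by
    intro t
    rw [intervalIntegral.integral_add (f := fun _ => k 0) (g := fun s => ρ * s) (intervalIntegrable_const)
      ((continuous_const.mul continuous_id : Continuous (fun s : ℝ => ρ * s)).intervalIntegrable 0 t)]
    rw [intervalIntegral.integral_const_mul, integral_id]
    simp
    ring
  rcases le_total 0 t with h | h
  · rw [← hval t]
    apply intervalIntegral.integral_mono_on h (hlin 0 t) (hint 0 t)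
    intro s hs
    have h2 : k 0 - ρ * 0 ≤ k s - ρ * s := hm hs.1
    linarith
  · rw [← hval t, ← neg_le_neg_iff, ← intervalIntegral.integral_symm, ← intervalIntegral.integral_symm]
    apply intervalIntegral.integral_mono_on h (hint t 0) (hlin t 0)
    intro s hs
    have h2 : k s - ρ * s ≤ k 0 - ρ * 0 := hm hs.2
    linarith

private lemma auxMono (ρ : ℝ) (k : ℝ → ℝ) (hk : ContDiff ℝ 1 k) (hk' : ∀ s, ρ ≤ deriv k s) :
    Monotone fun s => k s - ρ * s := by
  have hd : Differentiable ℝ k := hk.differentiable one_ne_zero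
  have h0 : ∀ s, 0 ≤ deriv (fun s => k s - ρ * s) s := by
    intro s
    have h1 : HasDerivAt (fun s => k s - ρ * s) (deriv k s - ρ) s := by
      have := ((hasDerivAt_id s).const_mul ρ)
      exact (hd s).hasDerivAt.sub (by simpa using this)
    rw [h1.deriv]; linarith [hk' s]
  exact monotone_of_deriv_nonneg (hd.sub (differentiable_id.const_mul ρ)) h0

private lemma auxNormSq (n : ℕ) (hn : 0 < n) (y : Fin n → ℝ) : ‖y‖^2 ≤ ∑ i, (y i)^2 := by
  have : Nonempty (Fin n) := ⟨⟨0, hn⟩⟩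
  obtain ⟨i, -, hi⟩ := Finset.exists_mem_eq_sup Finset.univ Finset.univ_nonempty (fun i => ‖y i‖₊)
  have h1 : ‖y‖ = |y i| := by rw [Pi.norm_def, hi]; simp [Real.norm_eq_abs]
  rw [h1]
  calc |y i|^2 = (y i)^2 := sq_abs _
    _ ≤ ∑ j, (y j)^2 :=
      Finset.single_le_sum (f := fun j => (y j)^2) (fun j _ => sq_nonneg _) (Finset.mem_univ i)

private lemma auxDot (n m : ℕ) (A : Matrix (Fin n) (Fin m) ℝ) (u : Fin m → ℝ) (v : Fin n → ℝ) :
    ∑ i, (A.mulVec u i) * v i = ∑ e, u e * (A.transpose.mulVec v e) := by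
  rw [Matrix.mulVec_transpose]
  have := Matrix.dotProduct_mulVec v A u
  simpa [dotProduct, mul_comm] using this

private lemma auxUniq (n m : ℕ) (ρ : ℝ) (hρ : 0 < ρ)
    (κ : Fin n → ℝ → ℝ) (hκm : ∀ i, Monotone fun s => κ i s - ρ * s)
    (γ : Fin m → ℝ → ℝ) (hγm : ∀ e, Monotone (γ e))
    (A : Matrix (Fin n) (Fin m) ℝ) (c : Fin n → ℝ) : ∀ y z : Fin n → ℝ,
      (fun i => κ i (y i) + A.mulVec (fun e => γ e (A.transpose.mulVec y e)) i) = c →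
      (fun i => κ i (z i) + A.mulVec (fun e => γ e (A.transpose.mulVec z e)) i) = c →
      y = z := by
  intro y z hy hz
  set u : Fin m → ℝ := A.transpose.mulVec y with hudef
  set v : Fin m → ℝ := A.transpose.mulVec z with hvdef
  set g : Fin m → ℝ := (fun e => γ e (v e)) - (fun e => γ e (u e)) with hgdef
  have hdiff : ∀ i, κ i (y i) - κ i (z i) = A.mulVec g i := by
    intro i
    have h1 := congrFun hy i
    have h2 := congrFun hz i
    have h3 : A.mulVec g i
        = A.mulVec (fun e => γ e (v e)) i - A.mulVec (fun e => γ e (u e)) i := by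
      rw [hgdef, Matrix.mulVec_sub]
      rfl
    rw [h3]
    rw [hudef] at h1
    rw [hvdef] at h2
    linarith
  have hmain : ∑ i, (κ i (y i) - κ i (z i)) * ((y - z) i)
      = ∑ e, (γ e (v e) - γ e (u e)) * (u e - v e) := by
    calc ∑ i, (κ i (y i) - κ i (z i)) * ((y - z) i)
        = ∑ i, (A.mulVec g i) * ((y - z) i) :=
          Finset.sum_congr rfl fun i _ => by rw [hdiff i]
      _ = ∑ e, g e * (A.transpose.mulVec (y - z) e) := auxDot n m A g (y - z)
      _ = ∑ e, (γ e (v e) - γ e (u e)) * (u e - v e) := by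
          rw [Matrix.mulVec_sub]
          refine Finset.sum_congr rfl fun e _ => ?_
          rw [hgdef, hudef, hvdef]
          simp only [Pi.sub_apply]
  have hge : ρ * ∑ i, (y i - z i)^2 ≤ ∑ i, (κ i (y i) - κ i (z i)) * ((y - z) i) := by
    rw [Finset.mul_sum]
    refine Finset.sum_le_sum fun i _ => ?_
    have := auxStrong ρ (κ i) (hκm i) (y i) (z i)
    simpa using this
  clear_value u v g
  have hle : ∑ e, (γ e (v e) - γ e (u e)) * (u e - v e) ≤ 0 := by
    apply Finset.sum_nonpos
    intro e _
    rcases le_total (u e) (v e) with h | h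
    · exact mul_nonpos_iff.2 (Or.inl ⟨by linarith [hγm e h], by linarith⟩)
    · exact mul_nonpos_iff.2 (Or.inr ⟨by linarith [hγm e h], by linarith⟩)
  have hnn : ∀ j ∈ Finset.univ, (0:ℝ) ≤ (y j - z j)^2 := fun j _ => sq_nonneg _
  have hsum0 : ∑ i, (y i - z i)^2 = 0 := by
    have h4 : ρ * ∑ i, (y i - z i)^2 ≤ 0 := by linarith
    have h5 : (0:ℝ) ≤ ∑ i, (y i - z i)^2 := Finset.sum_nonneg hnn
    have h6 : ∑ i, (y i - z i)^2 ≤ 0 := by nlinarith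
    linarith
  funext i
  have h6 := (Finset.sum_eq_zero_iff_of_nonneg hnn).1 hsum0 i (Finset.mem_univ i)
  have h7 : y i - z i = 0 := by
    have := sq_eq_zero_iff.mp h6
    exact this
  linarith


private lemma auxKey (n m : ℕ) (hn : 0 < n) (ρ : ℝ) (hρ : 0 < ρ)
    (κ : Fin n → ℝ → ℝ) (hκ : ∀ i, ContDiff ℝ 1 (κ i)) (hκ' : ∀ i s, ρ ≤ deriv (κ i) s)
    (γ : Fin m → ℝ → ℝ) (hγc : ∀ e, Continuous (γ e)) (hγm : ∀ e, Monotone (γ e))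
    (A : Matrix (Fin n) (Fin m) ℝ) (c : Fin n → ℝ) :
    ∃! y : Fin n → ℝ,
      (fun i => κ i (y i) + A.mulVec (fun e => γ e (A.transpose.mulVec y e)) i) = c := by
  have hκc : ∀ i, Continuous (κ i) := fun i => (hκ i).continuous
  have hκm : ∀ i, Monotone fun s => κ i s - ρ * s := fun i => auxMono ρ (κ i) (hκ i) (hκ' i)
  have hγm0 : ∀ e, Monotone fun s => γ e s - 0 * s := by
    intro e; simpa using hγm e
  -- the linear functionals
  set L : Fin m → ((Fin n → ℝ) →L[ℝ] ℝ) :=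
    fun e => ∑ j, A j e • (ContinuousLinearMap.proj j) with hLdef
  have hL : ∀ e y, L e y = A.transpose.mulVec y e := by
    intro e y
    simp [hLdef, Matrix.mulVec, dotProduct, Matrix.transpose_apply, mul_comm]
  set Lc : (Fin n → ℝ) →L[ℝ] ℝ := ∑ i, c i • (ContinuousLinearMap.proj i) with hLcdef
  have hLc : ∀ y, Lc y = ∑ i, c i * y i := by
    intro y; simp [hLcdef]
  -- the potential
  set G : (Fin n → ℝ) → ℝ :=
    fun y => (∑ i, ∫ s in (0:ℝ)..(y i), κ i s) + (∑ e, ∫ s in (0:ℝ)..(L e y), γ e s) - Lc y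
    with hGdef
  -- its derivative
  set D : (Fin n → ℝ) → ((Fin n → ℝ) →L[ℝ] ℝ) :=
    fun y => ((∑ i, κ i (y i) • (ContinuousLinearMap.proj i)) + (∑ e, γ e (L e y) • L e)) - Lc
    with hDdef
  have hFTC : ∀ (k : ℝ → ℝ), Continuous k → ∀ t : ℝ,
      HasDerivAt (fun u => ∫ s in (0:ℝ)..u, k s) (k t) t := by
    intro k hc t
    exact intervalIntegral.integral_hasDerivAt_right (hc.intervalIntegrable 0 t)
      (hc.stronglyMeasurableAtFilter _ _) hc.continuousAt
  have hD : ∀ y, HasFDerivAt G (D y) y := by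
    intro y
    have h1 : HasFDerivAt (fun z : Fin n → ℝ => ∑ i, ∫ s in (0:ℝ)..(z i), κ i s)
        (∑ i, κ i (y i) • (ContinuousLinearMap.proj i : (Fin n → ℝ) →L[ℝ] ℝ)) y := by
      apply HasFDerivAt.fun_sum
      intro i _
      exact (hFTC (κ i) (hκc i) (y i)).comp_hasFDerivAt y
        (ContinuousLinearMap.proj i : (Fin n → ℝ) →L[ℝ] ℝ).hasFDerivAt
    have h2 : HasFDerivAt (fun z : Fin n → ℝ => ∑ e, ∫ s in (0:ℝ)..(L e z), γ e s)
        (∑ e, γ e (L e y) • L e) y := by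
      apply HasFDerivAt.fun_sum
      intro e _
      exact (hFTC (γ e) (hγc e) (L e y)).comp_hasFDerivAt y (L e).hasFDerivAt
    exact (h1.add h2).sub Lc.hasFDerivAt
  have hGcont : Continuous G :=
    continuous_iff_continuousAt.2 fun y => (hD y).continuousAt
  -- coercivity
  set b : Fin n → ℝ := fun i => κ i 0 - c i + ∑ e, A i e * γ e 0 with hbdef
  set B : ℝ := ∑ i, |b i| with hBdef
  have hlow : ∀ y : Fin n → ℝ, (ρ/2) * ‖y‖^2 - B * ‖y‖ ≤ G y := by
    intro y
    have hK : ∀ i, κ i 0 * y i + ρ * (y i)^2 / 2 ≤ ∫ s in (0:ℝ)..(y i), κ i s :=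
      fun i => auxInt ρ (κ i) (hκc i) (hκm i) (y i)
    have hΓ : ∀ e, γ e 0 * (L e y) ≤ ∫ s in (0:ℝ)..(L e y), γ e s := by
      intro e
      have := auxInt 0 (γ e) (hγc e) (hγm0 e) (L e y)
      simpa using this
    have hsum1 : ∑ i, (κ i 0 * y i + ρ * (y i)^2 / 2) ≤ ∑ i, ∫ s in (0:ℝ)..(y i), κ i s :=
      Finset.sum_le_sum fun i _ => hK i
    have hsum2 : ∑ e, γ e 0 * (L e y) ≤ ∑ e, ∫ s in (0:ℝ)..(L e y), γ e s :=
      Finset.sum_le_sum fun e _ => hΓ e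
    -- rewrite the γ linear term
    have hswap : ∑ e, γ e 0 * (L e y) = ∑ i, (∑ e, A i e * γ e 0) * y i := by
      have : ∀ e, γ e 0 * (L e y) = ∑ i, A i e * γ e 0 * y i := by
        intro e
        rw [hL, Matrix.mulVec, dotProduct, Finset.mul_sum]
        congr 1; funext i; simp [Matrix.transpose_apply]; ring
      rw [Finset.sum_congr rfl fun e _ => this e, Finset.sum_comm]
      congr 1; funext i; rw [Finset.sum_mul]
    have hlin : ∑ i, b i * y i ≥ -(B * ‖y‖) := by
      have h1 : ∀ i, -( |b i| * ‖y‖) ≤ b i * y i := by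
        intro i
        have h2 : |b i * y i| ≤ |b i| * ‖y‖ := by
          rw [abs_mul]
          have := norm_le_pi_norm y i
          have hyi : |y i| ≤ ‖y‖ := by simpa [Real.norm_eq_abs] using this
          exact mul_le_mul_of_nonneg_left hyi (abs_nonneg _)
        linarith [neg_abs_le (b i * y i)]
      calc -(B * ‖y‖) = ∑ i, -( |b i| * ‖y‖) := by
            rw [hBdef, Finset.sum_mul]
            exact (Finset.sum_neg_distrib _).symm
        _ ≤ ∑ i, b i * y i := Finset.sum_le_sum fun i _ => h1 i
    have hnormsq : (ρ/2) * ‖y‖^2 ≤ (ρ/2) * ∑ i, (y i)^2 :=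
      mul_le_mul_of_nonneg_left (auxNormSq n hn y) (by linarith)
    have expand : ∑ i, (κ i 0 * y i + ρ * (y i)^2 / 2) + ∑ i, (∑ e, A i e * γ e 0) * y i - Lc y
        = (ρ/2) * ∑ i, (y i)^2 + ∑ i, b i * y i := by
      rw [hLc, Finset.mul_sum, ← Finset.sum_add_distrib, ← Finset.sum_sub_distrib,
        ← Finset.sum_add_distrib]
      apply Finset.sum_congr rfl
      intro i _
      simp only [hbdef]
      ring
    have hGy : G y = (∑ i, ∫ s in (0:ℝ)..(y i), κ i s)
        + (∑ e, ∫ s in (0:ℝ)..(L e y), γ e s) - Lc y := rfl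
    linarith [hsum1, hsum2, hnormsq, hlin, expand, hswap]
  -- choose radius
  set R : ℝ := max 1 ((2/ρ) * (B + |G 0| + 1)) with hRdef
  have hR1 : 1 ≤ R := le_max_left _ _
  have hR2 : (2/ρ) * (B + |G 0| + 1) ≤ R := le_max_right _ _
  have hBnn : 0 ≤ B := Finset.sum_nonneg fun i _ => abs_nonneg _
  have hout : ∀ z : Fin n → ℝ, R < ‖z‖ → G 0 < G z := by
    intro z hz
    have h1 := hlow z
    have hz1 : 1 ≤ ‖z‖ := le_trans hR1 hz.le
    have hz2 : (2/ρ) * (B + |G 0| + 1) ≤ ‖z‖ := le_trans hR2 hz.le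
    have h3 : B + |G 0| + 1 ≤ (ρ/2) * ‖z‖ := by
      have h4 := mul_le_mul_of_nonneg_left hz2 (by linarith : (0:ℝ) ≤ ρ/2)
      have h5 : (ρ/2) * ((2/ρ) * (B + |G 0| + 1)) = B + |G 0| + 1 := by
        field_simp
      linarith
    have k1 : ‖z‖ * (B + |G 0| + 1) ≤ ‖z‖ * ((ρ/2) * ‖z‖) :=
      mul_le_mul_of_nonneg_left h3 (norm_nonneg z)
    have k3 : |G 0| + 1 ≤ ‖z‖ * (|G 0| + 1) :=
      le_mul_of_one_le_left (by positivity) hz1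
    have ha := le_abs_self (G 0)
    clear_value B G R
    linarith
  -- minimizer on a big ball is a global minimizer
  have hcomp : IsCompact (Metric.closedBall (0 : Fin n → ℝ) R) := isCompact_closedBall _ _
  obtain ⟨y0, hy0mem, hy0min⟩ := hcomp.exists_isMinOn
    ⟨0, Metric.mem_closedBall_self (by linarith)⟩ hGcont.continuousOn
  have hglobal : ∀ z, G y0 ≤ G z := by
    intro z
    by_cases hz : z ∈ Metric.closedBall (0 : Fin n → ℝ) R
    · exact hy0min hz
    · have hz' : R < ‖z‖ := by
        rw [Metric.mem_closedBall, dist_zero_right, not_le] at hz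
        exact hz
      have h0 : G y0 ≤ G 0 := hy0min (Metric.mem_closedBall_self (by linarith))
      linarith [hout z hz']
  have hloc : IsLocalMin G y0 := Filter.Eventually.of_forall hglobal
  have hzero : D y0 = 0 := hloc.hasFDerivAt_eq_zero (hD y0)
  -- extract the Euler equations
  have heq : (fun i => κ i (y0 i) + A.mulVec (fun e => γ e (A.transpose.mulVec y0 e)) i) = c := by
    funext i
    have happ : D y0 (Pi.single i 1) = 0 := by rw [hzero]; simp
    rw [hDdef] at happ
    simp only [ContinuousLinearMap.coe_sub', Pi.sub_apply, ContinuousLinearMap.add_apply,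
      ContinuousLinearMap.coe_sum', Finset.sum_apply, ContinuousLinearMap.coe_smul',
      Pi.smul_apply, ContinuousLinearMap.proj_apply, smul_eq_mul] at happ
    have hps : ∀ (d : Fin n → ℝ), ∑ j, d j * (Pi.single i (1:ℝ) : Fin n → ℝ) j = d i := by
      intro d
      rw [Finset.sum_eq_single i]
      · simp
      · intro j _ hj; simp [Pi.single_apply, hj]
      · intro h; exact absurd (Finset.mem_univ i) h
    have hLs : ∀ e, L e (Pi.single i 1) = A i e := by
      intro e
      rw [hL]
      simp [Matrix.mulVec, dotProduct, Matrix.transpose_apply]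
      rw [Finset.sum_eq_single i]
      · simp
      · intro j _ hj; simp [Pi.single_apply, hj]
      · intro h; exact absurd (Finset.mem_univ i) h
    have hps1 := hps (fun j => κ j (y0 j))
    have hps2 := hps c
    have hLcs : Lc (Pi.single i 1) = c i := by
      rw [hLc]; exact hps2
    have hsum3 : ∑ e, γ e (L e y0) * (L e (Pi.single i 1)) = ∑ e, γ e (L e y0) * A i e := by
      exact Finset.sum_congr rfl fun e _ => by rw [hLs e]
    have hmv : A.mulVec (fun e => γ e (A.transpose.mulVec y0 e)) i = ∑ e, A i e * γ e (L e y0) := by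
      rw [Matrix.mulVec, dotProduct]
      exact Finset.sum_congr rfl fun e _ => by rw [hL]
    rw [hps1, hsum3, hLcs] at happ
    rw [hmv]
    have hcomm : ∑ e, γ e (L e y0) * A i e = ∑ e, A i e * γ e (L e y0) :=
      Finset.sum_congr rfl fun e _ => mul_comm _ _
    rw [hcomm] at happ
    linarith [happ]
  exact ⟨y0, heq, fun z hzq => auxUniq n m ρ hρ κ hκm γ hγm A c z y0 hzq heq⟩


/-- With `κᵢ : ℝ → ℝ` continuously differentiable with `κᵢ' ≥ ρ > 0`,
`γₑ : ℝ → ℝ` continuous and nondecreasing, and `A` a real `n × m` matrix, the map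
`F_A(y) = κ(y) + A γ(Aᵀ y)` is bijective: for every `c ∈ ℝⁿ` there exists exactly one
`y` with `F_A(y) = c`. In particular, for every `w ∈ ℝᵐ` the steady-state equation
`κ(y) + A γ(Aᵀ y) = −A w` has a unique solution. -/
theorem stmt_5 (n m : ℕ) (hn : 0 < n) (hm : 0 < m) (ρ : ℝ) (hρ : 0 < ρ)
    (κ : Fin n → ℝ → ℝ) (hκ : ∀ i, ContDiff ℝ 1 (κ i)) (hκ' : ∀ i s, ρ ≤ deriv (κ i) s)
    (γ : Fin m → ℝ → ℝ) (hγc : ∀ e, Continuous (γ e)) (hγm : ∀ e, Monotone (γ e))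
    (A : Matrix (Fin n) (Fin m) ℝ)
    (F : (Fin n → ℝ) → Fin n → ℝ)
    (hF : ∀ y, F y = fun i => κ i (y i) + A.mulVec (fun e => γ e (A.transpose.mulVec y e)) i) :
    (∀ c : Fin n → ℝ, ∃! y : Fin n → ℝ, F y = c) ∧
    (∀ w : Fin m → ℝ, ∃! y : Fin n → ℝ,
      (fun i => κ i (y i) + A.mulVec (fun e => γ e (A.transpose.mulVec y e)) i)
        = -(A.mulVec w)) := by
  constructor
  · intro c
    have h := auxKey n m hn ρ hρ κ hκ hκ' γ hγc hγm A c
    simpa only [hF] using h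
  · intro w
    exact auxKey n m hn ρ hρ κ hκ hκ' γ hγc hγm A (-(A.mulVec w))
end

section
/- Assume each γₑ is continuously differentiable with γₑ' ≥ 0, and let A₁, A₂ be real n × m matrices such that for some index e ∈ {1, …, m}, the e-th column of A₁ is nonzero while the e-th column of A₂ is zero. For j = 1, 2 and each w ∈ ℝ^m, let y_j(w) ∈ ℝⁿ denote the unique solution of κ(y) + A_j γ(A_jᵀ y) = −A_j w. Then the set { w ∈ ℝ^m : y₁(w) = y₂(w) } has Lebesgue measure zero in ℝ^m. Consequently, if w is sampled from any probability measure on ℝ^m that is absolutely continuous with respect to Lebesgue measure, then with probability one the two steady-state outputs differ: y₁(w) ≠ y₂(w). -/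
open MeasureTheory Finset

private lemma mono_mul_nonneg {g : ℝ → ℝ} (hg : ContDiff ℝ 1 g) (hg' : ∀ s, 0 ≤ deriv g s)
    (a b : ℝ) : 0 ≤ (g a - g b) * (a - b) := by
  have hmono : Monotone g := monotone_of_deriv_nonneg (hg.differentiable one_ne_zero) hg'
  rcases le_total b a with h | h
  · exact mul_nonneg (sub_nonneg.2 (hmono h)) (sub_nonneg.2 h)
  · have h1 : g a ≤ g b := hmono h
    nlinarith

private lemma strong_mul {ρ : ℝ} {k : ℝ → ℝ} (hk : ContDiff ℝ 1 k) (hk' : ∀ s, ρ ≤ deriv k s)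
    (a b : ℝ) : ρ * (a - b) ^ 2 ≤ (k a - k b) * (a - b) := by
  have hdiff : Differentiable ℝ k := hk.differentiable one_ne_zero
  have hg : Monotone (fun s => k s - ρ * s) := by
    apply monotone_of_deriv_nonneg
    · exact hdiff.sub (differentiable_id.const_mul ρ)
    · intro x
      have h1 : deriv (fun s => k s - ρ * s) x = deriv k x - ρ := by
        rw [deriv_fun_sub (hdiff x) (by fun_prop)]
        have : deriv (fun s : ℝ => ρ * s) x = ρ := by
          simpa using (deriv_const_mul ρ (differentiableAt_id' (x := x)))
        rw [this]
      rw [h1]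
      linarith [hk' x]
  rcases le_total b a with h | h
  · have h2 : k b - ρ * b ≤ k a - ρ * a := hg h
    nlinarith
  · have h2 : k a - ρ * a ≤ k b - ρ * b := hg h
    nlinarith

private lemma cs_step {ρ a b c : ℝ} (hρ : 0 < ρ) (ha : 0 ≤ a) (hc : 0 ≤ c)
    (h1 : ρ * a ≤ b) (h2 : b ^ 2 ≤ c * a) : ρ ^ 2 * a ≤ c := by
  rcases eq_or_lt_of_le ha with h | h
  · nlinarith
  · nlinarith [sq_nonneg b, mul_pos hρ h]

private lemma key_sum {n m : ℕ} {ρ : ℝ}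
    (κ : Fin n → ℝ → ℝ) (hκ : ∀ i, ContDiff ℝ 1 (κ i)) (hκ' : ∀ i s, ρ ≤ deriv (κ i) s)
    (γ : Fin m → ℝ → ℝ) (hγ : ∀ f, ContDiff ℝ 1 (γ f)) (hγ' : ∀ f s, 0 ≤ deriv (γ f) s)
    (A : Matrix (Fin n) (Fin m) ℝ) (y y' : Fin n → ℝ) :
    ρ * ∑ i, (y i - y' i) ^ 2 ≤
      ∑ i, ((κ i (y i) + A.mulVec (fun f => γ f (A.transpose.mulVec y f)) i)
        - (κ i (y' i) + A.mulVec (fun f => γ f (A.transpose.mulVec y' f)) i)) * (y i - y' i) := by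
  set d : Fin n → ℝ := fun i => y i - y' i with hd
  set g : Fin m → ℝ := fun f => γ f (A.transpose.mulVec y f) with hg
  set g' : Fin m → ℝ := fun f => γ f (A.transpose.mulVec y' f) with hg'
  have hsplit : ∑ i, ((κ i (y i) + A.mulVec g i) - (κ i (y' i) + A.mulVec g' i)) * d i
      = ∑ i, (κ i (y i) - κ i (y' i)) * d i
        + (∑ i, A.mulVec g i * d i - ∑ i, A.mulVec g' i * d i) := by
    rw [← Finset.sum_sub_distrib, ← Finset.sum_add_distrib]
    exact Finset.sum_congr rfl fun i _ => by ring
  have hdot : ∀ h : Fin m → ℝ, ∑ i, A.mulVec h i * d i = ∑ f, h f * A.transpose.mulVec d f := by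
    intro h
    have h1 : dotProduct d (A.mulVec h) = dotProduct h (A.transpose.mulVec d) := by
      rw [Matrix.dotProduct_mulVec, Matrix.mulVec_transpose, dotProduct_comm]
    simpa [dotProduct, mul_comm] using h1
  have htd : ∀ f, A.transpose.mulVec d f = A.transpose.mulVec y f - A.transpose.mulVec y' f := by
    intro f
    have h2 : d = y - y' := by funext i; simp [hd]
    rw [h2, Matrix.mulVec_sub]; simp
  have hsecond : 0 ≤ ∑ i, A.mulVec g i * d i - ∑ i, A.mulVec g' i * d i := by
    rw [hdot g, hdot g', ← Finset.sum_sub_distrib]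
    apply Finset.sum_nonneg
    intro f _
    have h3 : g f * A.transpose.mulVec d f - g' f * A.transpose.mulVec d f
        = (γ f (A.transpose.mulVec y f) - γ f (A.transpose.mulVec y' f))
          * (A.transpose.mulVec y f - A.transpose.mulVec y' f) := by
      rw [htd f]; simp [hg, hg']; ring
    rw [h3]
    exact mono_mul_nonneg (hγ f) (hγ' f) _ _
  have hfirst : ρ * ∑ i, d i ^ 2 ≤ ∑ i, (κ i (y i) - κ i (y' i)) * d i := by
    rw [Finset.mul_sum]
    exact Finset.sum_le_sum fun i _ => strong_mul (hκ i) (hκ' i) (y i) (y' i)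
  calc ρ * ∑ i, d i ^ 2 ≤ ∑ i, (κ i (y i) - κ i (y' i)) * d i := hfirst
    _ ≤ _ := by rw [hsplit]; linarith

private lemma F_inj {n m : ℕ} {ρ : ℝ} (hρ : 0 < ρ)
    (κ : Fin n → ℝ → ℝ) (hκ : ∀ i, ContDiff ℝ 1 (κ i)) (hκ' : ∀ i s, ρ ≤ deriv (κ i) s)
    (γ : Fin m → ℝ → ℝ) (hγ : ∀ f, ContDiff ℝ 1 (γ f)) (hγ' : ∀ f s, 0 ≤ deriv (γ f) s)
    (A : Matrix (Fin n) (Fin m) ℝ) (y y' : Fin n → ℝ)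
    (h : (fun i => κ i (y i) + A.mulVec (fun f => γ f (A.transpose.mulVec y f)) i)
       = (fun i => κ i (y' i) + A.mulVec (fun f => γ f (A.transpose.mulVec y' f)) i)) :
    y = y' := by
  have key := key_sum κ hκ hκ' γ hγ hγ' A y y'
  have hz : ∑ i, ((κ i (y i) + A.mulVec (fun f => γ f (A.transpose.mulVec y f)) i)
      - (κ i (y' i) + A.mulVec (fun f => γ f (A.transpose.mulVec y' f)) i)) * (y i - y' i) = 0 := by
    apply Finset.sum_eq_zero
    intro i _
    have := congrFun h i
    rw [this]
    ring
  rw [hz] at key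
  have hsum : ∑ i, (y i - y' i) ^ 2 = 0 := by
    have h0 : 0 ≤ ∑ i, (y i - y' i) ^ 2 := Finset.sum_nonneg fun i _ => sq_nonneg _
    nlinarith
  funext i
  have := (Finset.sum_eq_zero_iff_of_nonneg (fun i _ => sq_nonneg (y i - y' i))).1 hsum i
    (Finset.mem_univ i)
  have h5 : y i - y' i = 0 := by nlinarith [this]
  linarith

private lemma sq_sum_bound {n m : ℕ} {ρ : ℝ} (hρ : 0 < ρ)
    (κ : Fin n → ℝ → ℝ) (hκ : ∀ i, ContDiff ℝ 1 (κ i)) (hκ' : ∀ i s, ρ ≤ deriv (κ i) s)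
    (γ : Fin m → ℝ → ℝ) (hγ : ∀ f, ContDiff ℝ 1 (γ f)) (hγ' : ∀ f s, 0 ≤ deriv (γ f) s)
    (A : Matrix (Fin n) (Fin m) ℝ) (y y' : Fin n → ℝ) :
    ρ ^ 2 * ∑ i, (y i - y' i) ^ 2 ≤
      ∑ i, ((κ i (y i) + A.mulVec (fun f => γ f (A.transpose.mulVec y f)) i)
        - (κ i (y' i) + A.mulVec (fun f => γ f (A.transpose.mulVec y' f)) i)) ^ 2 := by
  have key := key_sum κ hκ hκ' γ hγ hγ' A y y'
  have cs := Finset.sum_mul_sq_le_sq_mul_sq Finset.univ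
    (fun i => (κ i (y i) + A.mulVec (fun f => γ f (A.transpose.mulVec y f)) i)
        - (κ i (y' i) + A.mulVec (fun f => γ f (A.transpose.mulVec y' f)) i))
    (fun i => y i - y' i)
  exact cs_step hρ (Finset.sum_nonneg fun i _ => sq_nonneg _)
    (Finset.sum_nonneg fun i _ => sq_nonneg _) key cs

/-- With `κᵢ : ℝ → ℝ` continuously differentiable with `κᵢ' ≥ ρ > 0`,
`γₑ : ℝ → ℝ` continuously differentiable with `γₑ' ≥ 0`, let `A₁, A₂` be real `n × m`
matrices such that for some index `e`, the `e`-th column of `A₁` is nonzero while the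
`e`-th column of `A₂` is zero. For `j = 1, 2`, let `y_j(w)` denote the unique solution of
`κ(y) + A_j γ(A_jᵀ y) = −A_j w`. Then `{w : y₁(w) = y₂(w)}` has Lebesgue measure zero;
consequently, for any probability measure absolutely continuous w.r.t. Lebesgue measure,
with probability one `y₁(w) ≠ y₂(w)`. -/
theorem stmt_7 (n m : ℕ) (hn : 0 < n) (hm : 0 < m) (ρ : ℝ) (hρ : 0 < ρ)
    (κ : Fin n → ℝ → ℝ) (hκ : ∀ i, ContDiff ℝ 1 (κ i)) (hκ' : ∀ i s, ρ ≤ deriv (κ i) s)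
    (γ : Fin m → ℝ → ℝ) (hγ : ∀ e, ContDiff ℝ 1 (γ e)) (hγ' : ∀ e s, 0 ≤ deriv (γ e) s)
    (A₁ A₂ : Matrix (Fin n) (Fin m) ℝ) (e : Fin m)
    (hA₁ : ∃ i, A₁ i e ≠ 0) (hA₂ : ∀ i, A₂ i e = 0)
    (y₁ y₂ : (Fin m → ℝ) → Fin n → ℝ)
    (hy₁ : ∀ w : Fin m → ℝ,
      (fun i => κ i (y₁ w i) + A₁.mulVec (fun f => γ f (A₁.transpose.mulVec (y₁ w) f)) i)
        = -(A₁.mulVec w))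
    (hy₂ : ∀ w : Fin m → ℝ,
      (fun i => κ i (y₂ w i) + A₂.mulVec (fun f => γ f (A₂.transpose.mulVec (y₂ w) f)) i)
        = -(A₂.mulVec w)) :
    volume {w : Fin m → ℝ | y₁ w = y₂ w} = 0 ∧
    ∀ μ : Measure (Fin m → ℝ), IsProbabilityMeasure μ → μ ≪ volume →
      μ {w : Fin m → ℝ | y₁ w ≠ y₂ w} = 1 := by
  classical
  obtain ⟨i₀, hi₀⟩ := hA₁
  -- A₂ ignores coordinate e
  have hA₂mul : ∀ (w : Fin m → ℝ) (t : ℝ), A₂.mulVec (Function.update w e t) = A₂.mulVec w := by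
    intro w t
    funext i
    unfold Matrix.mulVec dotProduct
    apply Finset.sum_congr rfl
    intro f _
    by_cases hf : f = e
    · subst hf; simp [hA₂ i]
    · simp [Function.update_of_ne hf]
  have hy₂upd : ∀ (w : Fin m → ℝ) (t : ℝ), y₂ (Function.update w e t) = y₂ w := by
    intro w t
    apply F_inj hρ κ hκ hκ' γ hγ hγ' A₂
    rw [hy₂, hy₂, hA₂mul]
  -- coordinatewise Lipschitz-type bound for y₂
  have hcoordbound : ∀ w w' : Fin m → ℝ, ∀ i,
      (y₂ w i - y₂ w' i) ^ 2 ≤ (∑ j, (A₂.mulVec w' j - A₂.mulVec w j) ^ 2) / ρ ^ 2 := by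
    intro w w' i
    have hb := sq_sum_bound hρ κ hκ hκ' γ hγ hγ' A₂ (y₂ w) (y₂ w')
    have heq : ∀ j, (κ j (y₂ w j) + A₂.mulVec (fun f => γ f (A₂.transpose.mulVec (y₂ w) f)) j)
        - (κ j (y₂ w' j) + A₂.mulVec (fun f => γ f (A₂.transpose.mulVec (y₂ w') f)) j)
        = A₂.mulVec w' j - A₂.mulVec w j := by
      intro j
      have h1 := congrFun (hy₂ w) j
      have h2 := congrFun (hy₂ w') j
      simp only [Pi.neg_apply] at h1 h2
      rw [h1, h2]
      ring
    simp only [heq] at hb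
    have hsingle : (y₂ w i - y₂ w' i) ^ 2 ≤ ∑ j, (y₂ w j - y₂ w' j) ^ 2 :=
      Finset.single_le_sum (f := fun j => (y₂ w j - y₂ w' j) ^ 2)
        (fun j _ => sq_nonneg _) (Finset.mem_univ i)
    rw [le_div_iff₀ (by positivity)]
    nlinarith [hb, hsingle]
  -- continuity of y₂
  have hy₂cont : Continuous y₂ := by
    apply continuous_pi
    intro i
    rw [continuous_iff_continuousAt]
    intro w
    have hgc : Continuous (fun w' : Fin m → ℝ =>
        Real.sqrt ((∑ j, (A₂.mulVec w j - A₂.mulVec w' j) ^ 2) / ρ ^ 2)) := by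
      apply Real.continuous_sqrt.comp
      apply Continuous.div_const
      apply continuous_finset_sum
      intro j _
      have hmv : Continuous fun w' : Fin m → ℝ => A₂.mulVec w' j := by
        unfold Matrix.mulVec dotProduct
        exact continuous_finset_sum _ fun f _ => continuous_const.mul (continuous_apply f)
      exact (continuous_const.sub hmv).pow 2
    have hg0 : Real.sqrt ((∑ j, (A₂.mulVec w j - A₂.mulVec w j) ^ 2) / ρ ^ 2) = 0 := by
      simp
    rw [ContinuousAt, tendsto_iff_dist_tendsto_zero]
    refine squeeze_zero (g := fun w' : Fin m → ℝ =>
        Real.sqrt ((∑ j, (A₂.mulVec w j - A₂.mulVec w' j) ^ 2) / ρ ^ 2))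
      (fun w' => dist_nonneg) (fun w' => ?_) ?_
    · rw [Real.dist_eq]
      calc |y₂ w' i - y₂ w i| = Real.sqrt ((y₂ w' i - y₂ w i) ^ 2) :=
            (Real.sqrt_sq_eq_abs _).symm
        _ ≤ Real.sqrt ((∑ j, (A₂.mulVec w j - A₂.mulVec w' j) ^ 2) / ρ ^ 2) :=
            Real.sqrt_le_sqrt (hcoordbound w' w i)
    · simpa [hg0] using hgc.tendsto w
  -- the continuous function Φ
  set Φ : (Fin m → ℝ) → ℝ := fun v =>
    κ i₀ (y₂ v i₀) + A₁.mulVec (fun f => γ f (A₁.transpose.mulVec (y₂ v) f)) i₀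
      + A₁.mulVec v i₀ with hΦ
  have hmvcont : ∀ (B : Matrix (Fin n) (Fin m) ℝ) (j : Fin n),
      Continuous fun v : Fin m → ℝ => B.mulVec v j := by
    intro B j
    unfold Matrix.mulVec dotProduct
    exact continuous_finset_sum _ fun f _ => continuous_const.mul (continuous_apply f)
  have hΦcont : Continuous Φ := by
    rw [hΦ]
    apply Continuous.add
    apply Continuous.add
    · exact ((hκ i₀).continuous).comp ((continuous_apply i₀).comp hy₂cont)
    · unfold Matrix.mulVec dotProduct
      apply continuous_finset_sum
      intro f _
      apply Continuous.mul continuous_const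
      apply ((hγ f).continuous).comp
      apply continuous_finset_sum
      intro i _
      exact Continuous.mul continuous_const ((continuous_apply i).comp hy₂cont)
    · exact hmvcont A₁ i₀
  set K : Set (Fin m → ℝ) :=
    {w | A₁ i₀ e * w e + Φ (Function.update w e 0) = 0} with hK
  -- the solution set is contained in K
  have hSK : {w : Fin m → ℝ | y₁ w = y₂ w} ⊆ K := by
    intro w hw
    have hw' : y₁ w = y₂ w := hw
    have h1 := congrFun (hy₁ w) i₀
    simp only [Pi.neg_apply] at h1
    have h2 : y₂ (Function.update w e 0) = y₁ w := by rw [hy₂upd w 0]; exact hw'.symm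
    have h3 : A₁.mulVec w i₀ - A₁.mulVec (Function.update w e 0) i₀ = A₁ i₀ e * w e := by
      unfold Matrix.mulVec dotProduct
      rw [← Finset.sum_sub_distrib]
      rw [Finset.sum_eq_single e]
      · simp
      · intro f _ hf
        simp [Function.update_of_ne hf]
      · intro h; exact absurd (Finset.mem_univ e) h
    show A₁ i₀ e * w e + Φ (Function.update w e 0) = 0
    rw [hΦ]
    simp only [h2]
    rw [h1]
    linarith
  have hKmeas : MeasurableSet K := by
    have : IsClosed K := by
      have hc : Continuous fun w : Fin m → ℝ => A₁ i₀ e * w e + Φ (Function.update w e 0) := by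
        apply Continuous.add
        · exact continuous_const.mul (continuous_apply e)
        · exact hΦcont.comp (continuous_id.update e continuous_const)
      exact isClosed_eq hc continuous_const
    exact this.measurableSet
  -- Fubini: K is null
  have hK0 : volume K = 0 := by
    set p : Fin m → Prop := fun f => f ≠ e with hp
    haveI : Unique {f : Fin m // ¬ p f} :=
      ⟨⟨⟨e, not_not_intro rfl⟩⟩, fun b => Subtype.ext (not_not.1 b.2)⟩
    set φ := MeasurableEquiv.piEquivPiSubtypeProd (fun _ : Fin m => ℝ) p with hφ
    have hmp := volume_preserving_piEquivPiSubtypeProd (fun _ : Fin m => ℝ) p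
    have hKpre : K = φ ⁻¹' (φ.symm ⁻¹' K) := by
      ext x; simp
    rw [hKpre, hmp.measure_preimage_equiv]
    have hTmeas : MeasurableSet (φ.symm ⁻¹' K) := φ.symm.measurable hKmeas
    rw [Measure.volume_eq_prod, Measure.measure_prod_null hTmeas]
    apply Filter.Eventually.of_forall
    intro u
    simp only [Pi.zero_apply]
    apply Set.Subsingleton.measure_zero
    intro v hv v' hv'
    have hsymm : ∀ v : {f : Fin m // ¬ p f} → ℝ, ∀ x : Fin m,
        φ.symm (u, v) x = if h : p x then u ⟨x, h⟩ else v ⟨x, h⟩ := by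
      intro v x
      rfl
    have he : ∀ v : {f : Fin m // ¬ p f} → ℝ,
        φ.symm (u, v) e = v ⟨e, not_not_intro rfl⟩ := by
      intro v
      rw [hsymm v e, dif_neg (not_not_intro rfl)]
    have hupd : Function.update (φ.symm (u, v)) e 0 = Function.update (φ.symm (u, v')) e 0 := by
      funext x
      by_cases hx : x = e
      · subst hx; simp
      · rw [Function.update_of_ne hx, Function.update_of_ne hx, hsymm v x, hsymm v' x,
          dif_pos hx, dif_pos hx]
    have hv1 : A₁ i₀ e * φ.symm (u, v) e + Φ (Function.update (φ.symm (u, v)) e 0) = 0 := hv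
    have hv2 : A₁ i₀ e * φ.symm (u, v') e + Φ (Function.update (φ.symm (u, v')) e 0) = 0 := hv'
    rw [hupd] at hv1
    rw [he v] at hv1
    rw [he v'] at hv2
    have hveq : v ⟨e, not_not_intro rfl⟩ = v' ⟨e, not_not_intro rfl⟩ := by
      have := sub_eq_zero.2 (hv1.trans hv2.symm)
      have h4 : A₁ i₀ e * (v ⟨e, not_not_intro rfl⟩ - v' ⟨e, not_not_intro rfl⟩) = 0 := by
        linarith [hv1, hv2]
      rcases mul_eq_zero.1 h4 with h | h
      · exact absurd h hi₀
      · linarith [sub_eq_zero.1 h]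
    funext x
    have hx : x = ⟨e, not_not_intro rfl⟩ := Subtype.ext (not_not.1 x.2)
    rw [hx]
    exact hveq
  have hS0 : volume {w : Fin m → ℝ | y₁ w = y₂ w} = 0 := measure_mono_null hSK hK0
  refine ⟨hS0, ?_⟩
  intro μ hμp hμac
  have hμS : μ {w : Fin m → ℝ | y₁ w = y₂ w} = 0 := hμac hS0
  have hcompl : {w : Fin m → ℝ | y₁ w ≠ y₂ w} = {w : Fin m → ℝ | y₁ w = y₂ w}ᶜ := rfl
  rw [hcompl]
  have : ({w : Fin m → ℝ | y₁ w = y₂ w}ᶜ : Set (Fin m → ℝ)) =ᵐ[μ] (Set.univ : Set (Fin m → ℝ)) := by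
    rw [MeasureTheory.ae_eq_univ, compl_compl]
    exact hμS
  rw [measure_congr this, measure_univ]
end

section
/- Let ρ = inf over all x ≠ x̄ of the ratio (f(x)/q(x) − f(x̄)/q(x̄)) / (h(x) − h(x̄)). Then: (i) ρ ≥ 0; (ii) S is differentiable on ℝ with S'(x) = (h(x) − h(x̄))/q(x); and (iii) for all x, u ∈ ℝ, writing ū = f(x̄)/q(x̄) and ȳ = h(x̄), the dissipation inequality S'(x) · (−f(x) + q(x)u) ≤ (h(x) − ȳ)(u − ū) − ρ (h(x) − ȳ)² holds. -/
/-- Let `f, q, h : ℝ → ℝ` with `q` continuous and positive, `h`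
continuously differentiable and strictly increasing, and `f/q` continuously differentiable
and nondecreasing. Fix `x̄` and let `S(x) = ∫_{x̄}^{x} (h(σ) − h(x̄))/q(σ) dσ`, and let
`ρ = inf_{x ≠ x̄} (f(x)/q(x) − f(x̄)/q(x̄)) / (h(x) − h(x̄))`. Then (i) `ρ ≥ 0`;
(ii) `S` is differentiable with `S'(x) = (h(x) − h(x̄))/q(x)`; and (iii) for all `x, u`,
`S'(x)(−f(x) + q(x)u) ≤ (h(x) − ȳ)(u − ū) − ρ (h(x) − ȳ)²` with `ū = f(x̄)/q(x̄)`,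
`ȳ = h(x̄)`. -/
theorem stmt_8 (f q h : ℝ → ℝ) (xbar : ℝ)
    (hq_cont : Continuous q) (hq_pos : ∀ x, 0 < q x)
    (hh : ContDiff ℝ 1 h) (hh_mono : StrictMono h)
    (hfq : ContDiff ℝ 1 (fun x => f x / q x)) (hfq_mono : Monotone (fun x => f x / q x))
    (S : ℝ → ℝ) (hS : ∀ x, S x = ∫ σ in xbar..x, (h σ - h xbar) / q σ)
    (ρ : ℝ)
    (hρdef : ρ = sInf {r : ℝ | ∃ x, x ≠ xbar ∧
      r = (f x / q x - f xbar / q xbar) / (h x - h xbar)}) :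
    0 ≤ ρ ∧
    (∀ x, HasDerivAt S ((h x - h xbar) / q x) x) ∧
    (∀ x u, deriv S x * (-f x + q x * u) ≤
      (h x - h xbar) * (u - f xbar / q xbar) - ρ * (h x - h xbar) ^ 2) := by
  have hcont : Continuous (fun σ => (h σ - h xbar) / q σ) :=
    (hh.continuous.sub continuous_const).div hq_cont (fun x => (hq_pos x).ne')
  have hderiv : ∀ x, HasDerivAt S ((h x - h xbar) / q x) x := by
    intro x
    have : S = fun x => ∫ σ in xbar..x, (h σ - h xbar) / q σ := funext hS
    rw [this]
    exact intervalIntegral.integral_hasDerivAt_right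
      (hcont.intervalIntegrable _ _) (hcont.stronglyMeasurableAtFilter _ _)
      hcont.continuousAt
  set T := {r : ℝ | ∃ x, x ≠ xbar ∧
      r = (f x / q x - f xbar / q xbar) / (h x - h xbar)} with hT
  have hTne : T.Nonempty := ⟨_, xbar + 1, by norm_num, rfl⟩
  have hTlb : ∀ r ∈ T, (0:ℝ) ≤ r := by
    rintro r ⟨x, hx, rfl⟩
    rcases lt_or_gt_of_ne hx with hlt | hgt
    · rw [← neg_div_neg_eq]
      exact div_nonneg (neg_nonneg.2 (sub_nonpos.2 (hfq_mono hlt.le)))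
        (neg_nonneg.2 (sub_nonpos.2 (hh_mono hlt).le))
    · exact div_nonneg (sub_nonneg.2 (hfq_mono hgt.le)) (sub_nonneg.2 (hh_mono hgt).le)
  have hρ0 : 0 ≤ ρ := hρdef ▸ le_csInf hTne hTlb
  refine ⟨hρ0, hderiv, ?_⟩
  intro x u
  rw [(hderiv x).deriv]
  by_cases hx : x = xbar
  · subst hx; simp
  · have hmem : (f x / q x - f xbar / q xbar) / (h x - h xbar) ∈ T := ⟨x, hx, rfl⟩
    have hρle : ρ ≤ (f x / q x - f xbar / q xbar) / (h x - h xbar) :=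
      hρdef ▸ csInf_le ⟨0, hTlb⟩ hmem
    have hy : h x - h xbar ≠ 0 := sub_ne_zero.2 (hh_mono.injective.ne hx)
    have hq0 : q x ≠ 0 := (hq_pos x).ne'
    have key : ρ * (h x - h xbar)^2 ≤ (h x - h xbar) * (f x / q x - f xbar / q xbar) := by
      calc ρ * (h x - h xbar)^2
          ≤ (f x / q x - f xbar / q xbar) / (h x - h xbar) * (h x - h xbar)^2 :=
            mul_le_mul_of_nonneg_right hρle (sq_nonneg _)
        _ = (h x - h xbar) * (f x / q x - f xbar / q xbar) := by
            rw [sq, ← mul_assoc, div_mul_cancel₀ _ hy, mul_comm]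
    have hLHS : (h x - h xbar)/q x * (-f x + q x * u)
        = (h x - h xbar) * (u - f x / q x) := by
      field_simp
      ring_nf
      try exact Or.inl trivial
    rw [hLHS]
    nlinarith [key]
end

section
/- There exists a strictly increasing function Ω : [0, ∞) → [0, ∞) with Ω(0) = 0 such that Ω(S(x)) ≤ (h(x) − h(x̄))² for every x ∈ ℝ. -/
/-- Let `q : ℝ → ℝ` be continuous and positive, `h : ℝ → ℝ` continuous
and strictly increasing, fix `x̄`, and let `S(x) = ∫_{x̄}^{x} (h(σ) − h(x̄))/q(σ) dσ`.
Then there exists a strictly increasing function `Ω : [0, ∞) → [0, ∞)` with `Ω(0) = 0`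
such that `Ω(S(x)) ≤ (h(x) − h(x̄))²` for every `x`. -/
theorem stmt_10 (q h : ℝ → ℝ) (xbar : ℝ)
    (hq_cont : Continuous q) (hq_pos : ∀ x, 0 < q x)
    (hh_cont : Continuous h) (hh_mono : StrictMono h)
    (S : ℝ → ℝ) (hS : ∀ x, S x = ∫ σ in xbar..x, (h σ - h xbar) / q σ) :
    ∃ Ω : ℝ → ℝ, StrictMonoOn Ω (Set.Ici 0) ∧ Ω 0 = 0 ∧
      (∀ θ, 0 ≤ θ → 0 ≤ Ω θ) ∧
      (∀ x, Ω (S x) ≤ (h x - h xbar) ^ 2) := by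
  set g : ℝ → ℝ := fun σ => (h σ - h xbar) / q σ with hg_def
  have hq_ne : ∀ x, q x ≠ 0 := fun x => (hq_pos x).ne'
  have hg_cont : Continuous g := (hh_cont.sub continuous_const).div hq_cont hq_ne
  have hInt : ∀ a b : ℝ, IntervalIntegrable g MeasureTheory.volume a b :=
    fun a b => hg_cont.intervalIntegrable a b
  have hS0 : S xbar = 0 := by rw [hS]; simp
  have hScont : Continuous S := by
    have hSfun : S = fun x => ∫ σ in xbar..x, g σ := funext hS
    rw [hSfun]
    exact intervalIntegral.continuous_primitive hInt xbar
  have hgnn : ∀ σ, xbar ≤ σ → 0 ≤ g σ := fun σ hσ =>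
    div_nonneg (sub_nonneg.2 (hh_mono.monotone hσ)) (hq_pos σ).le
  have hgnp : ∀ σ, σ ≤ xbar → g σ ≤ 0 := fun σ hσ =>
    div_nonpos_iff.2 (Or.inr ⟨sub_nonpos.2 (hh_mono.monotone hσ), (hq_pos σ).le⟩)
  have hSnn : ∀ x, 0 ≤ S x := by
    intro x
    rw [hS]
    rcases le_total xbar x with hx | hx
    · exact intervalIntegral.integral_nonneg hx (fun σ hσ => hgnn σ hσ.1)
    · rw [intervalIntegral.integral_symm]
      have hle : (0:ℝ) ≤ ∫ σ in x..xbar, -g σ :=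
        intervalIntegral.integral_nonneg hx (fun σ hσ => neg_nonneg.2 (hgnp σ hσ.2))
      rw [intervalIntegral.integral_neg] at hle
      linarith
  set φ : ℝ → ℝ := fun x => (h x - h xbar) ^ 2 with hφ
  set F : ℝ → ℝ → ℝ := fun θ x => φ x + max (θ - S x) 0 with hF
  have hFnn : ∀ θ x, 0 ≤ F θ x := fun θ x => add_nonneg (sq_nonneg _) (le_max_right _ _)
  have hbdd : ∀ θ, BddBelow (Set.range (F θ)) := by
    intro θ
    refine ⟨0, ?_⟩
    rintro y ⟨x, rfl⟩
    exact hFnn θ x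
  have hne : ∀ θ : ℝ, (Set.range (F θ)).Nonempty := fun θ => Set.range_nonempty _
  set Ω0 : ℝ → ℝ := fun θ => sInf (Set.range (F θ)) with hΩ0def
  have hΩ0_le : ∀ θ x, Ω0 θ ≤ F θ x := fun θ x => csInf_le (hbdd θ) ⟨x, rfl⟩
  have hΩ0_nn : ∀ θ, 0 ≤ Ω0 θ := by
    intro θ
    apply le_csInf (hne θ)
    rintro y ⟨x, rfl⟩
    exact hFnn θ x
  have hΩ0_mono : ∀ θ₁ θ₂, θ₁ ≤ θ₂ → Ω0 θ₁ ≤ Ω0 θ₂ := by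
    intro θ₁ θ₂ hθ
    apply le_csInf (hne θ₂)
    rintro y ⟨x, rfl⟩
    refine (hΩ0_le θ₁ x).trans ?_
    have hmm : max (θ₁ - S x) 0 ≤ max (θ₂ - S x) 0 :=
      max_le_max (by linarith) le_rfl
    simp only [hF]
    linarith
  have hΩ0_pos : ∀ θ, 0 < θ → 0 < Ω0 θ := by
    intro θ hθ
    obtain ⟨δ, hδ, hδS⟩ : ∃ δ > 0, ∀ x, |x - xbar| < δ → |S x| < θ / 2 := by
      obtain ⟨δ, hδ, hd⟩ := Metric.continuousAt_iff.1 hScont.continuousAt (θ / 2) (by linarith)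
      refine ⟨δ, hδ, fun x hx => ?_⟩
      have hdd := hd (x := x) (by simpa [Real.dist_eq] using hx)
      rw [Real.dist_eq, hS0, sub_zero] at hdd
      exact hdd
    set ε := min (h (xbar + δ) - h xbar) (h xbar - h (xbar - δ)) with hε_def
    have hε : 0 < ε :=
      lt_min (sub_pos.2 (hh_mono (by linarith))) (sub_pos.2 (hh_mono (by linarith)))
    set c := min (ε ^ 2) (θ / 2) with hc_def
    have hc : 0 < c := lt_min (by positivity) (by linarith)
    have hFc : ∀ x, c ≤ F θ x := by
      intro x
      rcases lt_or_ge (|x - xbar|) δ with hx | hx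
      · have h1 := abs_lt.1 (hδS x hx)
        have h2 : θ / 2 ≤ max (θ - S x) 0 := le_max_of_le_left (by linarith [h1.2])
        have h5 : c ≤ θ / 2 := min_le_right _ _
        have hφnn : (0:ℝ) ≤ φ x := sq_nonneg _
        simp only [hF]
        linarith
      · have hεle : ε ≤ |h x - h xbar| := by
          rcases le_abs.1 hx with hx1 | hx1
          · have hmm : h (xbar + δ) ≤ h x := hh_mono.monotone (by linarith)
            have h3 : ε ≤ h x - h xbar := le_trans (min_le_left _ _) (by linarith)
            exact h3.trans (le_abs_self _)
          · have hmm : h x ≤ h (xbar - δ) := hh_mono.monotone (by linarith)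
            have h3 : ε ≤ h xbar - h x := le_trans (min_le_right _ _) (by linarith)
            exact h3.trans (by rw [abs_sub_comm]; exact le_abs_self _)
        have h4 : ε ^ 2 ≤ (h x - h xbar) ^ 2 := by
          have := pow_le_pow_left₀ hε.le hεle 2
          simpa [sq_abs] using this
        have h5 : c ≤ ε ^ 2 := min_le_left _ _
        have h6 : (0:ℝ) ≤ max (θ - S x) 0 := le_max_right _ _
        simp only [hF, hφ]
        linarith
    refine lt_of_lt_of_le hc ?_
    apply le_csInf (hne θ)
    rintro y ⟨x, rfl⟩
    exact hFc x
  refine ⟨fun θ => (1 - Real.exp (-θ)) * Ω0 θ, ?_, ?_, ?_, ?_⟩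
  · intro a ha b hb hab
    simp only [Set.mem_Ici] at ha hb
    have hb0 : 0 < b := lt_of_le_of_lt ha hab
    have heb : Real.exp (-b) < 1 := Real.exp_lt_one_iff.2 (by linarith)
    have hΩb : 0 < Ω0 b := hΩ0_pos b hb0
    show (1 - Real.exp (-a)) * Ω0 a < (1 - Real.exp (-b)) * Ω0 b
    rcases eq_or_lt_of_le ha with ha0 | ha0
    · rw [← ha0]
      simp only [neg_zero, Real.exp_zero, sub_self, zero_mul]
      exact mul_pos (by linarith) hΩb
    · have hΩa : 0 < Ω0 a := hΩ0_pos a ha0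
      have hmono := hΩ0_mono a b hab.le
      have hexp : Real.exp (-b) < Real.exp (-a) := Real.exp_lt_exp.2 (by linarith)
      have hea : Real.exp (-a) < 1 := Real.exp_lt_one_iff.2 (by linarith)
      calc (1 - Real.exp (-a)) * Ω0 a
          < (1 - Real.exp (-b)) * Ω0 a := by nlinarith
        _ ≤ (1 - Real.exp (-b)) * Ω0 b :=
            mul_le_mul_of_nonneg_left hmono (by linarith)
  · simp only [neg_zero, Real.exp_zero, sub_self, zero_mul]
  · intro θ hθ
    have : Real.exp (-θ) ≤ 1 := Real.exp_le_one_iff.2 (by linarith)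
    exact mul_nonneg (by linarith) (hΩ0_nn θ)
  · intro x
    show (1 - Real.exp (-(S x))) * Ω0 (S x) ≤ (h x - h xbar) ^ 2
    have h1 : (1 - Real.exp (-(S x))) ≤ 1 := by
      have := Real.exp_pos (-(S x)); linarith
    have h2 : (1 - Real.exp (-(S x))) * Ω0 (S x) ≤ Ω0 (S x) :=
      mul_le_of_le_one_left (hΩ0_nn _) h1
    refine h2.trans ?_
    have h3 := hΩ0_le (S x) x
    simp only [hF, hφ, sub_self, max_self] at h3
    simpa using h3
end

section
/- Suppose additionally there are α > 0 and C > 0 such that lim_{x → x̄} |h(x) − h(x̄)| / |x − x̄|^α = C. For θ ≥ 0, define ω(θ) = sup { S(x) : x ∈ ℝ, (h(x) − h(x̄))² ≤ θ } (a value in [0, ∞]). Then ω(θ) is finite for all sufficiently small θ > 0, and lim_{θ → 0⁺} ω(θ) / θ^{(α+1)/(2α)} = 1 / ( q(x̄) (α + 1) C^{1/α} ). In particular, the generalized inverse Ω of ω satisfies that lim_{θ → 0⁺} Ω(θ)/θ^{β} exists and is finite for β = 2α/(α+1). -/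
open Filter Set

lemma aux_F_limit (q h : ℝ → ℝ) (xbar : ℝ)
    (hq_cont : Continuous q) (hq_pos : ∀ x, 0 < q x)
    (hh_cont : Continuous h) (hh_mono : StrictMono h)
    (S : ℝ → ℝ) (hS : ∀ x, S x = ∫ σ in xbar..x, (h σ - h xbar) / q σ)
    (α C : ℝ) (hα : 0 < α) (hC : 0 < C)
    (hlim : Tendsto (fun x => |h x - h xbar| / |x - xbar| ^ α)
      (nhdsWithin xbar {xbar}ᶜ) (nhds C)) :
    Tendsto (fun x => S x / ((h x - h xbar) ^ 2) ^ ((α + 1) / (2 * α)))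
      (nhdsWithin xbar {xbar}ᶜ) (nhds (1 / (q xbar * (α + 1) * C ^ (1 / α)))) := by
  have hα1 : (0:ℝ) < α + 1 := by linarith
  set f : ℝ → ℝ := fun x => (h x - h xbar) / q x with hf
  have hfc : Continuous f := (hh_cont.sub continuous_const).div hq_cont fun x => (hq_pos x).ne'
  have hSe : S = fun u => ∫ σ in xbar..u, f σ := funext hS
  have hd : ∀ x, HasDerivAt S (f x) x := by
    intro x; rw [hSe]; exact (hfc.integral_hasStrictDerivAt xbar x).hasDerivAt
  have hScont : Continuous S := continuous_iff_continuousAt.2 fun x => (hd x).continuousAt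
  have hS0 : S xbar = 0 := by rw [hS, intervalIntegral.integral_same]
  set g : ℝ → ℝ := fun x => |x - xbar| ^ (α + 1) with hg
  set g' : ℝ → ℝ := fun x => if xbar < x then (α + 1) * (x - xbar) ^ α
      else -((α + 1) * (xbar - x) ^ α) with hg'
  -- derivative of g off xbar
  have hgd : ∀ x, x ≠ xbar → HasDerivAt g (g' x) x := by
    intro x hx
    rcases lt_or_gt_of_ne hx with hlt | hgt
    · have h1 : HasDerivAt (fun y : ℝ => xbar - y) (-1) x := by
        simpa using (hasDerivAt_id x).const_sub xbar
      have h2 := h1.rpow_const (p := α + 1) (Or.inl (sub_pos.2 hlt).ne')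
      have h3 : HasDerivAt (fun y : ℝ => (xbar - y) ^ (α + 1))
          (-((α + 1) * (xbar - x) ^ α)) x := by
        convert h2 using 1; rw [add_sub_cancel_right]; ring
      have heq : g =ᶠ[nhds x] fun y => (xbar - y) ^ (α + 1) := by
        filter_upwards [Iio_mem_nhds hlt] with y hy
        rw [hg]; simp only
        rw [abs_of_neg (sub_neg.2 (mem_Iio.1 hy))]; ring_nf
      have := h3.congr_of_eventuallyEq heq
      simpa [hg', if_neg (not_lt.2 hlt.le)] using this
    · have h1 : HasDerivAt (fun y : ℝ => y - xbar) 1 x := (hasDerivAt_id x).sub_const xbar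
      have h2 := h1.rpow_const (p := α + 1) (Or.inl (sub_pos.2 hgt).ne')
      have h3 : HasDerivAt (fun y : ℝ => (y - xbar) ^ (α + 1))
          ((α + 1) * (x - xbar) ^ α) x := by
        convert h2 using 1; rw [add_sub_cancel_right]; ring
      have heq : g =ᶠ[nhds x] fun y => (y - xbar) ^ (α + 1) := by
        filter_upwards [Ioi_mem_nhds hgt] with y hy
        rw [hg]; simp only
        rw [abs_of_pos (sub_pos.2 (mem_Ioi.1 hy))]
      have := h3.congr_of_eventuallyEq heq
      simpa [hg', if_pos hgt] using this
  have hmem : ∀ᶠ x in nhdsWithin xbar {xbar}ᶜ, x ≠ xbar := by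
    exact eventually_mem_nhdsWithin
  have hL : Tendsto (fun x => S x / g x) (nhdsWithin xbar {xbar}ᶜ)
      (nhds (C * (q xbar * (α + 1))⁻¹)) := by
    apply HasDerivAt.lhopital_zero_nhdsNE
    · exact Eventually.of_forall fun x => hd x
    · filter_upwards [hmem] with x hx using hgd x hx
    · filter_upwards [hmem] with x hx
      rcases lt_or_gt_of_ne hx with hlt | hgt
      · have hpos : (0:ℝ) < xbar - x := sub_pos.2 hlt
        rw [hg']; simp only [if_neg (not_lt.2 hlt.le)]
        have : (0:ℝ) < (α + 1) * (xbar - x) ^ α := by positivity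
        simpa using this.ne'
      · have hpos : (0:ℝ) < x - xbar := sub_pos.2 hgt
        rw [hg']; simp only [if_pos hgt]; positivity
    · rw [← hS0]
      exact (hScont.tendsto xbar).mono_left nhdsWithin_le_nhds
    · have h1 : Tendsto (fun x => |x - xbar|) (nhdsWithin xbar {xbar}ᶜ) (nhds 0) := by
        have h0 : Tendsto (fun x : ℝ => |x - xbar|) (nhds xbar) (nhds (|xbar - xbar|)) :=
          Continuous.tendsto (by fun_prop) xbar
        simp only [sub_self, abs_zero] at h0
        exact h0.mono_left nhdsWithin_le_nhds
      have h2 : ContinuousAt (fun t : ℝ => t ^ (α + 1)) 0 :=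
        Real.continuousAt_rpow_const 0 (α + 1) (Or.inr hα1.le)
      have := h2.tendsto.comp h1
      rw [Real.zero_rpow hα1.ne'] at this
      exact this
    · -- derivative quotient
      have hq' : Tendsto (fun x => (q x * (α + 1))⁻¹) (nhdsWithin xbar {xbar}ᶜ)
          (nhds ((q xbar * (α + 1))⁻¹)) := by
        apply Tendsto.mono_left _ nhdsWithin_le_nhds
        exact ((hq_cont.tendsto xbar).mul tendsto_const_nhds).inv₀
          (mul_pos (hq_pos xbar) hα1).ne'
      have := hlim.mul hq'
      apply this.congr'
      filter_upwards [hmem] with x hx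
      rcases lt_or_gt_of_ne hx with hlt | hgt
      · have he : h x - h xbar < 0 := sub_neg.2 (hh_mono hlt)
        have hxb : x - xbar < 0 := sub_neg.2 hlt
        rw [hf, hg']; simp only [if_neg (not_lt.2 hlt.le)]
        rw [abs_of_neg he, abs_of_neg hxb]
        have : xbar - x = -(x - xbar) := by ring
        rw [← this]
        simp only [div_eq_mul_inv, mul_inv, neg_mul, neg_neg, mul_neg, inv_neg]
        ring
      · have he : (0:ℝ) < h x - h xbar := sub_pos.2 (hh_mono hgt)
        have hxb : (0:ℝ) < x - xbar := sub_pos.2 hgt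
        rw [hf, hg']; simp only [if_pos hgt]
        rw [abs_of_pos he, abs_of_pos hxb]
        simp only [div_eq_mul_inv, mul_inv]
        ring
  -- second factor
  set r : ℝ := (α + 1) / α with hr
  have hinv : Tendsto (fun x => |x - xbar| ^ α / |h x - h xbar|)
      (nhdsWithin xbar {xbar}ᶜ) (nhds C⁻¹) := by
    have := hlim.inv₀ hC.ne'
    apply this.congr
    intro x; rw [inv_div]
  have hG : Tendsto (fun x => (|x - xbar| ^ α / |h x - h xbar|) ^ r)
      (nhdsWithin xbar {xbar}ᶜ) (nhds (C⁻¹ ^ r)) :=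
    (Real.continuousAt_rpow_const _ r (Or.inl (inv_ne_zero hC.ne'))).tendsto.comp hinv
  have hmul := hL.mul hG
  have hKey : Tendsto (fun x => S x / ((h x - h xbar) ^ 2) ^ ((α + 1) / (2 * α)))
      (nhdsWithin xbar {xbar}ᶜ) (nhds (C * (q xbar * (α + 1))⁻¹ * C⁻¹ ^ r)) := by
    apply hmul.congr'
    filter_upwards [hmem] with x hx
    have hA : 0 < |x - xbar| := abs_pos.2 (sub_ne_zero.2 hx)
    have hB : 0 < |h x - h xbar| :=
      abs_pos.2 (sub_ne_zero.2 fun hh => hx (hh_mono.injective hh))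
    have e1 : ((h x - h xbar) ^ 2 : ℝ) ^ ((α + 1) / (2 * α)) = |h x - h xbar| ^ r := by
      rw [← sq_abs, ← Real.rpow_natCast (|h x - h xbar|) 2,
        ← Real.rpow_mul (abs_nonneg _)]
      congr 1
      push_cast
      rw [hr]
      field_simp
    have e2 : (|x - xbar| ^ α / |h x - h xbar|) ^ r
        = |x - xbar| ^ (α + 1) / |h x - h xbar| ^ r := by
      rw [Real.div_rpow (Real.rpow_nonneg (abs_nonneg _) _) (abs_nonneg _),
        ← Real.rpow_mul (abs_nonneg _)]
      congr 2
      rw [hr]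
      field_simp
    show S x / g x * (|x - xbar| ^ α / |h x - h xbar|) ^ r = _
    rw [e1, e2, hg]
    simp only
    have hA1 : (|x - xbar| ^ (α + 1)) ≠ 0 := by positivity
    rw [div_mul_div_comm, mul_comm (S x) _, mul_div_mul_left _ _ hA1]
  have hconst : C * (q xbar * (α + 1))⁻¹ * C⁻¹ ^ r = 1 / (q xbar * (α + 1) * C ^ (1 / α)) := by
    have h1 : (C⁻¹ : ℝ) ^ r = (C ^ r)⁻¹ := Real.inv_rpow hC.le r
    have h2 : C ^ r = C * C ^ (1 / α) := by
      rw [hr]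
      have he : (α + 1) / α = 1 + 1 / α := by field_simp
      rw [he, Real.rpow_add hC, Real.rpow_one]
    have hCr : (0:ℝ) < C ^ (1/α) := Real.rpow_pos_of_pos hC _
    have hq0 : (0:ℝ) < q xbar := hq_pos xbar
    rw [h1, h2]
    field_simp
  rw [hconst] at hKey
  exact hKey

/-- Let `q : ℝ → ℝ` be continuous and positive, `h : ℝ → ℝ` continuous
and strictly increasing, fix `x̄`, and let `S(x) = ∫_{x̄}^{x} (h(σ) − h(x̄))/q(σ) dσ`.
Suppose there are `α > 0` and `C > 0` with `lim_{x → x̄} |h(x) − h(x̄)|/|x − x̄|^α = C`.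
For `θ ≥ 0` define `ω(θ) = sup { S(x) : (h(x) − h(x̄))² ≤ θ }`. Then `ω(θ)` is finite
(i.e. the set is bounded above) for all sufficiently small `θ > 0`,
`lim_{θ → 0⁺} ω(θ)/θ^((α+1)/(2α)) = 1/(q(x̄)(α+1)C^(1/α))`, and the generalized inverse
`Ω(s) = inf { θ ≥ 0 : s ≤ ω(θ) }` satisfies that `lim_{θ → 0⁺} Ω(θ)/θ^β` exists and is
finite, where `β = 2α/(α+1)`. -/
theorem stmt_11 (q h : ℝ → ℝ) (xbar : ℝ)
    (hq_cont : Continuous q) (hq_pos : ∀ x, 0 < q x)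
    (hh_cont : Continuous h) (hh_mono : StrictMono h)
    (S : ℝ → ℝ) (hS : ∀ x, S x = ∫ σ in xbar..x, (h σ - h xbar) / q σ)
    (α C : ℝ) (hα : 0 < α) (hC : 0 < C)
    (hlim : Tendsto (fun x => |h x - h xbar| / |x - xbar| ^ α)
      (nhdsWithin xbar {xbar}ᶜ) (nhds C))
    (ω : ℝ → ℝ)
    (hω : ∀ θ, ω θ = sSup {s : ℝ | ∃ x, (h x - h xbar) ^ 2 ≤ θ ∧ s = S x})
    (Ω : ℝ → ℝ)
    (hΩ : ∀ s, Ω s = sInf {θ : ℝ | 0 ≤ θ ∧ s ≤ ω θ}) :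
    (∃ θ₀ > 0, ∀ θ, 0 < θ → θ < θ₀ →
      BddAbove {s : ℝ | ∃ x, (h x - h xbar) ^ 2 ≤ θ ∧ s = S x}) ∧
    Tendsto (fun θ => ω θ / θ ^ ((α + 1) / (2 * α)))
      (nhdsWithin 0 (Set.Ioi 0)) (nhds (1 / (q xbar * (α + 1) * C ^ (1 / α)))) ∧
    ∃ L : ℝ, Tendsto (fun θ => Ω θ / θ ^ (2 * α / (α + 1)))
      (nhdsWithin 0 (Set.Ioi 0)) (nhds L) := by
  classical
  have hα1 : (0:ℝ) < α + 1 := by linarith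
  set p : ℝ := (α + 1) / (2 * α) with hp
  set β : ℝ := 2 * α / (α + 1) with hβ
  set K : ℝ := 1 / (q xbar * (α + 1) * C ^ (1 / α)) with hK
  have hKpos : 0 < K := by
    have h1 := Real.rpow_pos_of_pos hC (1/α)
    have h2 := hq_pos xbar
    positivity
  have hppos : 0 < p := by rw [hp]; positivity
  have hβpos : 0 < β := by rw [hβ]; positivity
  have hpβ : p * β = 1 := by rw [hp, hβ]; field_simp
  have hβp : β * p = 1 := by rw [mul_comm]; exact hpβ
  -- integrand
  set f : ℝ → ℝ := fun x => (h x - h xbar) / q x with hf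
  have hfc : Continuous f := (hh_cont.sub continuous_const).div hq_cont fun x => (hq_pos x).ne'
  have hS0 : S xbar = 0 := by rw [hS, intervalIntegral.integral_same]
  -- monotonicity of S away from xbar
  have hSle_right : ∀ x b : ℝ, xbar ≤ x → x ≤ b → S x ≤ S b := by
    intro x b hx hb
    have hadd := intervalIntegral.integral_add_adjacent_intervals (μ := MeasureTheory.volume)
      (hfc.intervalIntegrable xbar x) (hfc.intervalIntegrable x b)
    have hnn : 0 ≤ ∫ σ in x..b, f σ := by
      apply intervalIntegral.integral_nonneg hb
      intro u hu
      have : h xbar ≤ h u := hh_mono.monotone (le_trans hx hu.1)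
      exact div_nonneg (by linarith) (hq_pos u).le
    have : S b = S x + ∫ σ in x..b, f σ := by rw [hS, hS]; exact hadd.symm
    linarith
  have hSle_left : ∀ a x : ℝ, a ≤ x → x ≤ xbar → S x ≤ S a := by
    intro a x ha hx
    have hadd := intervalIntegral.integral_add_adjacent_intervals (μ := MeasureTheory.volume)
      (hfc.intervalIntegrable xbar a) (hfc.intervalIntegrable a x)
    have hnp : (∫ σ in a..x, f σ) ≤ 0 := by
      have hnn : 0 ≤ ∫ σ in a..x, (fun u => -f u) σ := by
        apply intervalIntegral.integral_nonneg ha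
        intro u hu
        have : h u ≤ h xbar := hh_mono.monotone (le_trans hu.2 hx)
        simp only [hf]
        have : (h u - h xbar) / q u ≤ 0 :=
          div_nonpos_of_nonpos_of_nonneg (by linarith) (hq_pos u).le
        linarith
      rw [intervalIntegral.integral_neg] at hnn
      linarith
    have : S x = S a + ∫ σ in a..x, f σ := by rw [hS, hS]; exact hadd.symm
    linarith
  -- threshold
  set M : ℝ := min (h (xbar+1) - h xbar) (h xbar - h (xbar-1)) with hM
  have hMpos : 0 < M :=
    lt_min (sub_pos.2 (hh_mono (by linarith))) (sub_pos.2 (hh_mono (by linarith)))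
  set θ₀ : ℝ := M ^ 2 with hθ₀def
  have hθ₀pos : 0 < θ₀ := by rw [hθ₀def]; positivity
  have key : ∀ θ : ℝ, 0 < θ → θ < θ₀ → ∃ ab : ℝ × ℝ,
      (ab.1 < xbar ∧ xbar < ab.2) ∧
      h ab.1 = h xbar - Real.sqrt θ ∧ h ab.2 = h xbar + Real.sqrt θ := by
    intro θ h0 h1
    have hs : Real.sqrt θ < M := (Real.sqrt_lt' hMpos).2 (by rw [← hθ₀def]; exact h1)
    have hspos : 0 < Real.sqrt θ := Real.sqrt_pos.2 h0
    have hMl := min_le_left (h (xbar+1) - h xbar) (h xbar - h (xbar-1))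
    have hMr := min_le_right (h (xbar+1) - h xbar) (h xbar - h (xbar-1))
    rw [← hM] at hMl hMr
    have hb : h xbar + Real.sqrt θ ∈ Icc (h xbar) (h (xbar+1)) :=
      ⟨by linarith, by linarith⟩
    obtain ⟨b, hbmem, hbeq⟩ := intermediate_value_Icc
      (by linarith : xbar ≤ xbar + 1) hh_cont.continuousOn hb
    have ha : h xbar - Real.sqrt θ ∈ Icc (h (xbar-1)) (h xbar) :=
      ⟨by linarith, by linarith⟩
    obtain ⟨a, hamem, haeq⟩ := intermediate_value_Icc
      (by linarith : xbar - 1 ≤ xbar) hh_cont.continuousOn ha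
    refine ⟨(a, b), ⟨?_, ?_⟩, haeq, hbeq⟩
    · exact hh_mono.lt_iff_lt.1 (by rw [haeq]; linarith)
    · exact hh_mono.lt_iff_lt.1 (by rw [hbeq]; linarith)
  set A : ℝ → ℝ := fun θ =>
    if hθ : 0 < θ ∧ θ < θ₀ then (key θ hθ.1 hθ.2).choose.1 else xbar with hAdef
  set B : ℝ → ℝ := fun θ =>
    if hθ : 0 < θ ∧ θ < θ₀ then (key θ hθ.1 hθ.2).choose.2 else xbar with hBdef
  have hAB : ∀ θ : ℝ, 0 < θ → θ < θ₀ → A θ < xbar ∧ xbar < B θ ∧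
      h (A θ) = h xbar - Real.sqrt θ ∧ h (B θ) = h xbar + Real.sqrt θ := by
    intro θ h0 h1
    have hspec := (key θ h0 h1).choose_spec
    rw [hAdef, hBdef]
    simp only [dif_pos (⟨h0, h1⟩ : 0 < θ ∧ θ < θ₀)]
    exact ⟨hspec.1.1, hspec.1.2, hspec.2.1, hspec.2.2⟩
  -- set description
  have hsetEq : ∀ θ : ℝ, 0 < θ → θ < θ₀ →
      {s : ℝ | ∃ x, (h x - h xbar) ^ 2 ≤ θ ∧ s = S x} = S '' Icc (A θ) (B θ) := by
    intro θ h0 h1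
    obtain ⟨hA1, hB1, hA2, hB2⟩ := hAB θ h0 h1
    ext s
    simp only [mem_setOf_eq, mem_image, mem_Icc]
    constructor
    · rintro ⟨x, hx, rfl⟩
      refine ⟨x, ⟨?_, ?_⟩, rfl⟩
      · have habs : |h x - h xbar| ≤ Real.sqrt θ := by
          rw [← Real.sqrt_sq_eq_abs]; exact Real.sqrt_le_sqrt hx
        rw [abs_le] at habs
        exact hh_mono.le_iff_le.1 (by rw [hA2]; linarith [habs.1])
      · have habs : |h x - h xbar| ≤ Real.sqrt θ := by
          rw [← Real.sqrt_sq_eq_abs]; exact Real.sqrt_le_sqrt hx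
        rw [abs_le] at habs
        exact hh_mono.le_iff_le.1 (by rw [hB2]; linarith [habs.2])
    · rintro ⟨x, ⟨hxa, hxb⟩, rfl⟩
      refine ⟨x, ?_, rfl⟩
      have h1' := hh_mono.monotone hxa
      have h2' := hh_mono.monotone hxb
      rw [hA2] at h1'; rw [hB2] at h2'
      have habs : |h x - h xbar| ≤ Real.sqrt θ := abs_le.2 ⟨by linarith, by linarith⟩
      calc (h x - h xbar) ^ 2 = |h x - h xbar| ^ 2 := (sq_abs _).symm
        _ ≤ (Real.sqrt θ) ^ 2 := by
            exact pow_le_pow_left₀ (abs_nonneg _) habs 2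
        _ = θ := Real.sq_sqrt h0.le
  have hbound : ∀ θ : ℝ, 0 < θ → θ < θ₀ →
      ∀ s ∈ S '' Icc (A θ) (B θ), s ≤ max (S (A θ)) (S (B θ)) := by
    intro θ h0 h1 s hs
    obtain ⟨hA1, hB1, hA2, hB2⟩ := hAB θ h0 h1
    obtain ⟨x, ⟨hxa, hxb⟩, rfl⟩ := hs
    rcases le_total x xbar with hx | hx
    · exact le_max_of_le_left (hSle_left (A θ) x hxa hx)
    · exact le_max_of_le_right (hSle_right x (B θ) hx hxb)
  have hωmax : ∀ θ : ℝ, 0 < θ → θ < θ₀ → ω θ = max (S (A θ)) (S (B θ)) := by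
    intro θ h0 h1
    obtain ⟨hA1, hB1, hA2, hB2⟩ := hAB θ h0 h1
    have hABle : A θ ≤ B θ := by linarith
    rw [hω, hsetEq θ h0 h1]
    apply le_antisymm
    · refine csSup_le ?_ (hbound θ h0 h1)
      exact ⟨S (A θ), ⟨A θ, ⟨le_refl _, hABle⟩, rfl⟩⟩
    · apply max_le
      · exact le_csSup ⟨max (S (A θ)) (S (B θ)), hbound θ h0 h1⟩
          ⟨A θ, ⟨le_refl _, hABle⟩, rfl⟩
      · exact le_csSup ⟨max (S (A θ)) (S (B θ)), hbound θ h0 h1⟩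
          ⟨B θ, ⟨hABle, le_refl _⟩, rfl⟩
  have hω0 : ω 0 = 0 := by
    rw [hω]
    have hsing : {s : ℝ | ∃ x, (h x - h xbar) ^ 2 ≤ 0 ∧ s = S x} = {0} := by
      ext s
      simp only [mem_setOf_eq, mem_singleton_iff]
      constructor
      · rintro ⟨x, hx, rfl⟩
        have hx0 : h x - h xbar = 0 := by nlinarith [sq_nonneg (h x - h xbar)]
        have hxx : x = xbar := hh_mono.injective (by linarith)
        rw [hxx, hS0]
      · intro hs
        exact ⟨xbar, by simp, by rw [hs, hS0]⟩
    rw [hsing, csSup_singleton]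
  have hωlim : Tendsto (fun θ => ω θ / θ ^ p) (nhdsWithin 0 (Ioi 0)) (nhds K) := by
    have hF := aux_F_limit q h xbar hq_cont hq_pos hh_cont hh_mono S hS α C hα hC hlim
    have hIoo : Ioo (0:ℝ) θ₀ ∈ nhdsWithin (0:ℝ) (Ioi 0) :=
      Ioo_mem_nhdsGT_of_mem ⟨le_refl 0, hθ₀pos⟩
    have hBtend : Tendsto B (nhdsWithin 0 (Ioi 0)) (nhdsWithin xbar {xbar}ᶜ) := by
      rw [tendsto_nhdsWithin_iff]
      constructor
      · rw [tendsto_order]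
        constructor
        · intro c hc
          filter_upwards [hIoo] with θ hθ
          have := (hAB θ hθ.1 hθ.2).2.1
          linarith
        · intro c hc
          have hε : 0 < h c - h xbar := sub_pos.2 (hh_mono hc)
          have hmem2 : Ioo (0:ℝ) (min θ₀ ((h c - h xbar)^2)) ∈ nhdsWithin (0:ℝ) (Ioi 0) :=
            Ioo_mem_nhdsGT_of_mem ⟨le_refl 0, lt_min hθ₀pos (by positivity)⟩
          filter_upwards [hmem2] with θ hθ
          obtain ⟨_, hB1, _, hB2⟩ := hAB θ hθ.1 (lt_of_lt_of_le hθ.2 (min_le_left _ _))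
          have hsq : Real.sqrt θ < h c - h xbar :=
            (Real.sqrt_lt' hε).2 (lt_of_lt_of_le hθ.2 (min_le_right _ _))
          have hhh : h (B θ) < h c := by rw [hB2]; linarith
          exact hh_mono.lt_iff_lt.1 hhh
      · filter_upwards [hIoo] with θ hθ
        have := (hAB θ hθ.1 hθ.2).2.1
        simp only [mem_compl_iff, mem_singleton_iff]
        exact ne_of_gt this
    have hAtend : Tendsto A (nhdsWithin 0 (Ioi 0)) (nhdsWithin xbar {xbar}ᶜ) := by
      rw [tendsto_nhdsWithin_iff]
      constructor
      · rw [tendsto_order]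
        constructor
        · intro c hc
          have hε : 0 < h xbar - h c := sub_pos.2 (hh_mono hc)
          have hmem2 : Ioo (0:ℝ) (min θ₀ ((h xbar - h c)^2)) ∈ nhdsWithin (0:ℝ) (Ioi 0) :=
            Ioo_mem_nhdsGT_of_mem ⟨le_refl 0, lt_min hθ₀pos (by positivity)⟩
          filter_upwards [hmem2] with θ hθ
          obtain ⟨hA1, _, hA2, _⟩ := hAB θ hθ.1 (lt_of_lt_of_le hθ.2 (min_le_left _ _))
          have hsq : Real.sqrt θ < h xbar - h c :=
            (Real.sqrt_lt' hε).2 (lt_of_lt_of_le hθ.2 (min_le_right _ _))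
          have hhh : h c < h (A θ) := by rw [hA2]; linarith
          exact hh_mono.lt_iff_lt.1 hhh
        · intro c hc
          filter_upwards [hIoo] with θ hθ
          have := (hAB θ hθ.1 hθ.2).1
          linarith
      · filter_upwards [hIoo] with θ hθ
        have := (hAB θ hθ.1 hθ.2).1
        simp only [mem_compl_iff, mem_singleton_iff]
        exact ne_of_lt this
    have hFB : Tendsto (fun θ => S (B θ) / θ ^ p) (nhdsWithin 0 (Ioi 0)) (nhds K) := by
      have hcomp := hF.comp hBtend
      apply hcomp.congr'
      filter_upwards [hIoo] with θ hθ
      obtain ⟨_, _, _, hB2⟩ := hAB θ hθ.1 hθ.2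
      simp only [Function.comp]
      have hsq : (h (B θ) - h xbar) ^ 2 = θ := by
        rw [hB2]
        have he : h xbar + Real.sqrt θ - h xbar = Real.sqrt θ := by ring
        rw [he]
        exact Real.sq_sqrt hθ.1.le
      rw [hsq]
    have hFA : Tendsto (fun θ => S (A θ) / θ ^ p) (nhdsWithin 0 (Ioi 0)) (nhds K) := by
      have hcomp := hF.comp hAtend
      apply hcomp.congr'
      filter_upwards [hIoo] with θ hθ
      obtain ⟨_, _, hA2, _⟩ := hAB θ hθ.1 hθ.2
      simp only [Function.comp]
      have hsq : (h (A θ) - h xbar) ^ 2 = θ := by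
        rw [hA2]
        have he : h xbar - Real.sqrt θ - h xbar = -Real.sqrt θ := by ring
        rw [he, neg_sq]
        exact Real.sq_sqrt hθ.1.le
      rw [hsq]
    have hmaxt := hFA.max hFB
    rw [max_self] at hmaxt
    apply hmaxt.congr'
    filter_upwards [hIoo] with θ hθ
    have hθp : (0:ℝ) < θ ^ p := Real.rpow_pos_of_pos hθ.1 p
    rw [hωmax θ hθ.1 hθ.2]
    exact max_div_div_right hθp.le _ _
  refine ⟨⟨θ₀, hθ₀pos, fun θ h0 h1 => ?_⟩, hωlim, ?_⟩
  · rw [hsetEq θ h0 h1]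
    exact ⟨max (S (A θ)) (S (B θ)), hbound θ h0 h1⟩
  · -- inverse function limit
    refine ⟨K ^ (-β), ?_⟩
    have hbnds : ∀ ε : ℝ, 0 < ε → ε < K →
        (∀ᶠ s in nhdsWithin (0:ℝ) (Ioi 0), Ω s ≤ s ^ β / (K - ε) ^ β) ∧
        (∀ᶠ s in nhdsWithin (0:ℝ) (Ioi 0), s ^ β / (K + ε) ^ β ≤ Ω s) := by
      intro ε hε hεK
      have hKε₁ : (0:ℝ) < K - ε := by linarith
      have hKε₂ : (0:ℝ) < K + ε := by linarith
      have hev : ∀ᶠ θ in nhdsWithin (0:ℝ) (Ioi 0), dist (ω θ / θ ^ p) K < ε :=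
        Metric.tendsto_nhds.1 hωlim ε hε
      obtain ⟨θ₁, hθ₁, hsub⟩ := mem_nhdsGT_iff_exists_Ioo_subset.1 hev
      rw [mem_Ioi] at hθ₁
      have hub : ∀ θ ∈ Ioo (0:ℝ) θ₁, ω θ < (K + ε) * θ ^ p ∧ (K - ε) * θ ^ p < ω θ := by
        intro θ hθ
        have hd := hsub hθ
        rw [mem_setOf_eq, Real.dist_eq, abs_lt] at hd
        have hθp : (0:ℝ) < θ ^ p := Real.rpow_pos_of_pos hθ.1 p
        constructor
        · have h1 : ω θ / θ ^ p < K + ε := by linarith [hd.2]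
          have := (div_lt_iff₀ hθp).1 h1
          linarith [this, mul_comm (K + ε) (θ ^ p)]
        · have h1 : K - ε < ω θ / θ ^ p := by linarith [hd.1]
          have := (lt_div_iff₀ hθp).1 h1
          linarith [this, mul_comm (K - ε) (θ ^ p)]
      have hθ₁p : (0:ℝ) < θ₁ ^ p := Real.rpow_pos_of_pos hθ₁ p
      -- the witness θ for a given s
      have hwit : ∀ s : ℝ, 0 < s → s < (K - ε) * θ₁ ^ p →
          (s / (K - ε)) ^ β ∈ Ioo (0:ℝ) θ₁ ∧ s ≤ ω ((s / (K - ε)) ^ β) := by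
        intro s hs hs'
        have hdivpos : 0 < s / (K - ε) := div_pos hs hKε₁
        have htpos : 0 < (s / (K - ε)) ^ β := Real.rpow_pos_of_pos hdivpos β
        have h1 : s / (K - ε) < θ₁ ^ p := (div_lt_iff₀ hKε₁).2 (by rw [mul_comm]; exact hs')
        have h2 : (s / (K - ε)) ^ β < (θ₁ ^ p) ^ β :=
          Real.rpow_lt_rpow hdivpos.le h1 hβpos
        rw [← Real.rpow_mul hθ₁.le, hpβ, Real.rpow_one] at h2
        have htp : ((s / (K - ε)) ^ β) ^ p = s / (K - ε) := by
          rw [← Real.rpow_mul hdivpos.le, hβp, Real.rpow_one]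
        have hωt : s ≤ ω ((s / (K - ε)) ^ β) := by
          have h3 := (hub _ ⟨htpos, h2⟩).2
          rw [htp] at h3
          have h4 : (K - ε) * (s / (K - ε)) = s := by field_simp
          linarith [h3, h4.symm ▸ h3]
        exact ⟨⟨htpos, h2⟩, hωt⟩
      constructor
      · have hIs : Ioo (0:ℝ) ((K - ε) * θ₁ ^ p) ∈ nhdsWithin (0:ℝ) (Ioi 0) :=
          Ioo_mem_nhdsGT_of_mem ⟨le_refl 0, by positivity⟩
        filter_upwards [hIs] with s hs
        obtain ⟨htIoo, hωt⟩ := hwit s hs.1 hs.2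
        have hΩle : Ω s ≤ (s / (K - ε)) ^ β := by
          rw [hΩ]
          exact csInf_le ⟨0, fun u hu => hu.1⟩ ⟨htIoo.1.le, hωt⟩
        rwa [Real.div_rpow hs.1.le hKε₁.le] at hΩle
      · have hIs : Ioo (0:ℝ) (min ((K - ε) * θ₁ ^ p) ((K + ε) * θ₁ ^ p)) ∈
            nhdsWithin (0:ℝ) (Ioi 0) :=
          Ioo_mem_nhdsGT_of_mem ⟨le_refl 0, lt_min (by positivity) (by positivity)⟩
        filter_upwards [hIs] with s hs
        have hs1 : s < (K - ε) * θ₁ ^ p := lt_of_lt_of_le hs.2 (min_le_left _ _)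
        have hs2 : s < (K + ε) * θ₁ ^ p := lt_of_lt_of_le hs.2 (min_le_right _ _)
        rw [hΩ]
        apply le_csInf
        · obtain ⟨htIoo, hωt⟩ := hwit s hs.1 hs1
          exact ⟨(s / (K - ε)) ^ β, htIoo.1.le, hωt⟩
        · rintro u ⟨hu0, hsu⟩
          have hclaim : (s / (K + ε)) ^ β ≤ u := by
            rcases lt_or_ge u θ₁ with hcase | hcase
            · rcases hu0.lt_or_eq with hupos | hzero
              · have h1 := (hub u ⟨hupos, hcase⟩).1
                have h2 : s ≤ (K + ε) * u ^ p := le_trans hsu h1.le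
                have h3 : s / (K + ε) ≤ u ^ p :=
                  (div_le_iff₀ hKε₂).2 (by rw [mul_comm]; exact h2)
                have h4 : (s / (K + ε)) ^ β ≤ (u ^ p) ^ β :=
                  Real.rpow_le_rpow (div_nonneg hs.1.le hKε₂.le) h3 hβpos.le
                rwa [← Real.rpow_mul hupos.le, hpβ, Real.rpow_one] at h4
              · exfalso
                rw [← hzero, hω0] at hsu
                linarith [hs.1]
            · have h1 : s / (K + ε) < θ₁ ^ p := (div_lt_iff₀ hKε₂).2 (by rw [mul_comm]; exact hs2)
              have h2 : (s / (K + ε)) ^ β < (θ₁ ^ p) ^ β :=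
                Real.rpow_lt_rpow (div_nonneg hs.1.le hKε₂.le) h1 hβpos
              rw [← Real.rpow_mul hθ₁.le, hpβ, Real.rpow_one] at h2
              linarith
          rw [Real.div_rpow hs.1.le hKε₂.le] at hclaim
          exact hclaim
    have hKβ : (0:ℝ) < K ^ β := Real.rpow_pos_of_pos hKpos β
    have hKnegβ : K ^ (-β) = (K ^ β)⁻¹ := Real.rpow_neg hKpos.le β
    rw [tendsto_order]
    constructor
    · intro c hc
      -- choose ε with c < ((K+ε)^β)⁻¹
      have hcont : Tendsto (fun ε : ℝ => ((K + ε) ^ β)⁻¹) (nhdsWithin 0 (Ioi 0))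
          (nhds ((K ^ β)⁻¹)) := by
        have t1 : Tendsto (fun ε : ℝ => K + ε) (nhds 0) (nhds (K + 0)) :=
          tendsto_const_nhds.add tendsto_id
        rw [add_zero] at t1
        have t2 : Tendsto (fun t : ℝ => t ^ β) (nhds K) (nhds (K ^ β)) :=
          (Real.continuousAt_rpow_const K β (Or.inl hKpos.ne')).tendsto
        have t3 := (t2.comp t1).inv₀ hKβ.ne'
        exact t3.mono_left nhdsWithin_le_nhds
      have hev1 : ∀ᶠ ε in nhdsWithin (0:ℝ) (Ioi 0), c < ((K + ε) ^ β)⁻¹ :=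
        hcont.eventually (eventually_gt_nhds (by rw [← hKnegβ]; exact hc))
      have hev2 : ∀ᶠ ε in nhdsWithin (0:ℝ) (Ioi 0), ε ∈ Ioo (0:ℝ) K :=
        Ioo_mem_nhdsGT_of_mem ⟨le_refl 0, hKpos⟩
      obtain ⟨ε, hcε, hεmem⟩ := (hev1.and hev2).exists
      obtain ⟨hε0, hεK⟩ := hεmem
      have hlow := (hbnds ε hε0 hεK).2
      filter_upwards [hlow, self_mem_nhdsWithin] with s hlows hsmem
      rw [mem_Ioi] at hsmem
      have hsβ : (0:ℝ) < s ^ β := Real.rpow_pos_of_pos hsmem β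
      have h1 : s ^ β / (K + ε) ^ β / s ^ β ≤ Ω s / s ^ β :=
        (div_le_div_iff_of_pos_right hsβ).2 hlows
      have h2 : s ^ β / (K + ε) ^ β / s ^ β = ((K + ε) ^ β)⁻¹ := by
        field_simp
      rw [h2] at h1
      exact lt_of_lt_of_le hcε h1
    · intro c hc
      have hcont : Tendsto (fun ε : ℝ => ((K - ε) ^ β)⁻¹) (nhdsWithin 0 (Ioi 0))
          (nhds ((K ^ β)⁻¹)) := by
        have t1 : Tendsto (fun ε : ℝ => K - ε) (nhds 0) (nhds (K - 0)) :=
          tendsto_const_nhds.sub tendsto_id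
        rw [sub_zero] at t1
        have t2 : Tendsto (fun t : ℝ => t ^ β) (nhds K) (nhds (K ^ β)) :=
          (Real.continuousAt_rpow_const K β (Or.inl hKpos.ne')).tendsto
        have t3 := (t2.comp t1).inv₀ hKβ.ne'
        exact t3.mono_left nhdsWithin_le_nhds
      have hev1 : ∀ᶠ ε in nhdsWithin (0:ℝ) (Ioi 0), ((K - ε) ^ β)⁻¹ < c :=
        hcont.eventually (eventually_lt_nhds (by rw [← hKnegβ]; exact hc))
      have hev2 : ∀ᶠ ε in nhdsWithin (0:ℝ) (Ioi 0), ε ∈ Ioo (0:ℝ) K :=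
        Ioo_mem_nhdsGT_of_mem ⟨le_refl 0, hKpos⟩
      obtain ⟨ε, hcε, hεmem⟩ := (hev1.and hev2).exists
      obtain ⟨hε0, hεK⟩ := hεmem
      have hKε₁ : (0:ℝ) < K - ε := by linarith
      have hhigh := (hbnds ε hε0 hεK).1
      filter_upwards [hhigh, self_mem_nhdsWithin] with s hhighs hsmem
      rw [mem_Ioi] at hsmem
      have hsβ : (0:ℝ) < s ^ β := Real.rpow_pos_of_pos hsmem β
      have h1 : Ω s / s ^ β ≤ s ^ β / (K - ε) ^ β / s ^ β :=
        (div_le_div_iff_of_pos_right hsβ).2 hhighs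
      have h2 : s ^ β / (K - ε) ^ β / s ^ β = ((K - ε) ^ β)⁻¹ := by
        field_simp
      rw [h2] at h1
      exact lt_of_le_of_lt h1 hcε
end

section
/- Let n ≥ 1, let ρ₁, …, ρₙ be positive real numbers, and let Ω₁, …, Ωₙ : [0, ∞) → [0, ∞) be continuously differentiable strictly increasing functions such that Ωᵢ(θ) = 0 if and only if θ = 0. Suppose that for each i there exists βᵢ > 0 such that the limit lim_{θ → 0⁺} Ωᵢ(θ)/θ^{βᵢ} exists and is positive. Define Ω⋆ : [0, ∞) → [0, ∞) by Ω⋆(θ) = minᵢ Ωᵢ(θ). Then for every D > 0 there exists a constant C > 0 such that for all θ₁, …, θₙ ∈ [0, D], one has Σ_{i=1}^{n} ρᵢ Ωᵢ(θᵢ) ≥ C · Ω⋆( Σ_{i=1}^{n} θᵢ ). -/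
open Filter Set

lemma key_ratio (f : ℝ → ℝ) (hc : ContinuousOn f (Set.Ici 0))
    (hpos : ∀ θ : ℝ, 0 < θ → 0 < f θ) (β L : ℝ) (hβ : 0 < β) (hL : 0 < L)
    (hlim : Tendsto (fun θ : ℝ => f θ / θ ^ β) (nhdsWithin 0 (Set.Ioi 0)) (nhds L))
    (m : ℝ) (hm : 0 < m) (D : ℝ) (hD : 0 < D) :
    ∃ c > 0, ∀ θ ∈ Set.Ioc (0:ℝ) D, c * f (m * θ) ≤ f θ := by
  set ℓ : ℝ := m ^ (-β) with hℓ
  have hℓpos : 0 < ℓ := Real.rpow_pos_of_pos hm _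
  -- map θ ↦ m θ
  have hmap : Tendsto (fun θ : ℝ => m * θ) (nhdsWithin 0 (Set.Ioi 0))
      (nhdsWithin 0 (Set.Ioi 0)) := by
    apply tendsto_nhdsWithin_of_tendsto_nhds_of_eventually_within
    · have h1 : Tendsto (fun θ : ℝ => m * θ) (nhds 0) (nhds (m * 0)) :=
        ((continuous_const.mul continuous_id).tendsto 0)
      rw [mul_zero] at h1
      exact h1.mono_left nhdsWithin_le_nhds
    · filter_upwards [self_mem_nhdsWithin] with θ hθ
      exact mul_pos hm hθ
  have h2 : Tendsto (fun θ : ℝ => f (m * θ) / (m * θ) ^ β)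
      (nhdsWithin 0 (Set.Ioi 0)) (nhds L) := hlim.comp hmap
  have hG : Tendsto (fun θ : ℝ => (f θ / θ ^ β) / (f (m * θ) / (m * θ) ^ β) * ℓ)
      (nhdsWithin 0 (Set.Ioi 0)) (nhds (L / L * ℓ)) :=
    (hlim.div h2 hL.ne').mul_const ℓ
  rw [div_self hL.ne', one_mul] at hG
  have heq : (fun θ : ℝ => (f θ / θ ^ β) / (f (m * θ) / (m * θ) ^ β) * ℓ)
      =ᶠ[nhdsWithin 0 (Set.Ioi 0)] (fun θ : ℝ => f θ / f (m * θ)) := by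
    filter_upwards [self_mem_nhdsWithin] with θ (hθ : 0 < θ)
    have hθβ : (0:ℝ) < θ ^ β := Real.rpow_pos_of_pos hθ β
    have hmθ : 0 < m * θ := mul_pos hm hθ
    have hfm : 0 < f (m * θ) := hpos _ hmθ
    rw [hℓ, Real.mul_rpow hm.le hθ.le, Real.rpow_neg hm.le]
    have hmβ : (0:ℝ) < m ^ β := Real.rpow_pos_of_pos hm β
    field_simp
  have hg : Tendsto (fun θ : ℝ => f θ / f (m * θ))
      (nhdsWithin 0 (Set.Ioi 0)) (nhds ℓ) := hG.congr' heq
  have hev : ∀ᶠ θ in nhdsWithin 0 (Set.Ioi 0), ℓ / 2 < f θ / f (m * θ) :=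
    hg.eventually (eventually_gt_nhds (by linarith))
  obtain ⟨ε, hε, hsub⟩ := mem_nhdsGT_iff_exists_Ioc_subset.mp hev
  rw [Set.mem_Ioi] at hε
  by_cases hcase : D ≤ ε
  · refine ⟨ℓ / 2, by linarith, fun θ hθ => ?_⟩
    have hθε : θ ∈ Set.Ioc (0:ℝ) ε := ⟨hθ.1, hθ.2.trans hcase⟩
    have h3 : ℓ / 2 < f θ / f (m * θ) := hsub hθε
    have hfm : 0 < f (m * θ) := hpos _ (mul_pos hm hθ.1)
    nlinarith [(le_div_iff₀ hfm).mp h3.le]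
  · push_neg at hcase
    -- compact part on [ε, D]
    have hgc : ContinuousOn (fun θ : ℝ => f θ / f (m * θ)) (Set.Icc ε D) := by
      refine ContinuousOn.div ?_ ?_ ?_
      · exact hc.mono (fun x hx => hε.le.trans hx.1)
      · exact hc.comp ((continuous_const.mul continuous_id).continuousOn)
          (fun x hx => mul_nonneg hm.le (hε.le.trans hx.1))
      · exact fun x hx => (hpos _ (mul_pos hm (hε.trans_le hx.1))).ne'
    obtain ⟨θ₀, hθ₀mem, hθ₀min⟩ :=
      isCompact_Icc.exists_isMinOn ⟨ε, le_refl ε, hcase.le⟩ hgc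
    have hc₂ : 0 < f θ₀ / f (m * θ₀) :=
      div_pos (hpos _ (hε.trans_le hθ₀mem.1)) (hpos _ (mul_pos hm (hε.trans_le hθ₀mem.1)))
    refine ⟨min (ℓ / 2) (f θ₀ / f (m * θ₀)), lt_min (by linarith) hc₂, fun θ hθ => ?_⟩
    have hfm : 0 < f (m * θ) := hpos _ (mul_pos hm hθ.1)
    have hle : min (ℓ / 2) (f θ₀ / f (m * θ₀)) ≤ f θ / f (m * θ) := by
      by_cases hθε : θ ≤ ε
      · exact (min_le_left _ _).trans (hsub ⟨hθ.1, hθε⟩).le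
      · push_neg at hθε
        exact (min_le_right _ _).trans (isMinOn_iff.mp hθ₀min θ ⟨hθε.le, hθ.2⟩)
    exact (le_div_iff₀ hfm).mp hle




/-- Proposition 7 of the paper. Let `ρ₁, …, ρₙ > 0` and let
`Ω₁, …, Ωₙ : [0, ∞) → [0, ∞)` be continuously differentiable strictly increasing
functions with `Ωᵢ(θ) = 0` iff `θ = 0`, each behaving like a power law near `0`
(`lim_{θ→0⁺} Ωᵢ(θ)/θ^{βᵢ}` exists and is positive for some `βᵢ > 0`). Let
`Ω⋆(θ) = minᵢ Ωᵢ(θ)`. Then for every `D > 0` there is `C > 0` such that for all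
`θ₁, …, θₙ ∈ [0, D]`, `∑ ρᵢ Ωᵢ(θᵢ) ≥ C · Ω⋆(∑ θᵢ)`. -/
theorem stmt_12 (n : ℕ) (hn : 0 < n)
    (ρ : Fin n → ℝ) (hρ : ∀ i, 0 < ρ i)
    (Ω : Fin n → ℝ → ℝ)
    (hΩdiff : ∀ i, ContDiffOn ℝ 1 (Ω i) (Set.Ici 0))
    (hΩmono : ∀ i, StrictMonoOn (Ω i) (Set.Ici 0))
    (hΩnonneg : ∀ i θ, 0 ≤ θ → 0 ≤ Ω i θ)
    (hΩzero : ∀ i θ, 0 ≤ θ → (Ω i θ = 0 ↔ θ = 0))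
    (β : Fin n → ℝ) (hβ : ∀ i, 0 < β i)
    (L : Fin n → ℝ) (hL : ∀ i, 0 < L i)
    (hlim : ∀ i, Tendsto (fun θ : ℝ => Ω i θ / θ ^ β i)
      (nhdsWithin 0 (Set.Ioi 0)) (nhds (L i)))
    (Ωstar : ℝ → ℝ) (hΩstar : ∀ θ, Ωstar θ = ⨅ i, Ω i θ) :
    ∀ D > 0, ∃ C > 0, ∀ θ : Fin n → ℝ, (∀ i, θ i ∈ Set.Icc 0 D) →
      C * Ωstar (∑ i, θ i) ≤ ∑ i, ρ i * Ω i (θ i) := by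
  intro D hD
  haveI : Nonempty (Fin n) := Fin.pos_iff_nonempty.mp hn
  set m : ℝ := (n : ℝ) with hmdef
  have hm : (0:ℝ) < m := by rw [hmdef]; exact_mod_cast hn
  have hΩ0 : ∀ i, Ω i 0 = 0 := fun i => (hΩzero i 0 le_rfl).mpr rfl
  have hpos : ∀ i, ∀ θ : ℝ, 0 < θ → 0 < Ω i θ := fun i θ hθ => by
    have := hΩmono i (Set.self_mem_Ici) (le_of_lt hθ) hθ
    rwa [hΩ0 i] at this
  have hbdd : ∀ t : ℝ, BddBelow (Set.range (fun i => Ω i t)) :=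
    fun t => (Set.finite_range _).bddBelow
  -- get constants c i from the key lemma
  have hkey : ∀ i, ∃ c > 0, ∀ θ ∈ Set.Ioc (0:ℝ) D, c * Ω i (m * θ) ≤ Ω i θ :=
    fun i => key_ratio (Ω i) (hΩdiff i).continuousOn (hpos i) (β i) (L i)
      (hβ i) (hL i) (hlim i) m hm D hD
  choose c hcpos hc using hkey
  obtain ⟨i₀, hi₀⟩ := Finite.exists_min ρ
  obtain ⟨j₀, hj₀⟩ := Finite.exists_min c
  refine ⟨ρ i₀ * c j₀, mul_pos (hρ i₀) (hcpos j₀), fun θ hθ => ?_⟩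
  obtain ⟨j, hj⟩ := Finite.exists_max θ
  have hsum_nonneg : (0:ℝ) ≤ ∑ i, ρ i * Ω i (θ i) :=
    Finset.sum_nonneg fun i _ => mul_nonneg (hρ i).le (hΩnonneg i _ (hθ i).1)
  by_cases hzero : θ j = 0
  · have hall : ∀ i, θ i = 0 := fun i => le_antisymm (hzero ▸ hj i) (hθ i).1
    have : (∑ i, θ i) = 0 := Finset.sum_eq_zero fun i _ => hall i
    rw [this, hΩstar]
    have : (⨅ i, Ω i 0) = 0 := by
      simp only [hΩ0]; exact ciInf_const
    rw [this, mul_zero]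
    exact hsum_nonneg
  · have hθj : 0 < θ j := lt_of_le_of_ne (hθ j).1 (Ne.symm hzero)
    have hSle : (∑ i, θ i) ≤ m * θ j := by
      have h1 : (∑ i, θ i) ≤ Finset.univ.card • θ j :=
        Finset.sum_le_card_nsmul _ _ _ (fun i _ => hj i)
      rwa [Finset.card_univ, Fintype.card_fin, nsmul_eq_mul] at h1
    have hSnonneg : (0:ℝ) ≤ ∑ i, θ i := Finset.sum_nonneg fun i _ => (hθ i).1
    -- Ωstar monotone
    have hstar_mono : Ωstar (∑ i, θ i) ≤ Ωstar (m * θ j) := by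
      rw [hΩstar, hΩstar]
      exact ciInf_mono (hbdd _) (fun i =>
        (hΩmono i).monotoneOn hSnonneg (hSnonneg.trans hSle) hSle)
    -- k attaining the min at θ j
    obtain ⟨k, hk⟩ := exists_eq_ciInf_of_finite (f := fun i => Ω i (θ j))
    have hkm : 0 ≤ Ω k (m * θ j) := hΩnonneg k _ (mul_nonneg hm.le hθj.le)
    have step1 : Ωstar (m * θ j) ≤ Ω k (m * θ j) := by
      rw [hΩstar]; exact ciInf_le (hbdd _) k
    have step2 : c j₀ * Ω k (m * θ j) ≤ c k * Ω k (m * θ j) :=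
      mul_le_mul_of_nonneg_right (hj₀ k) hkm
    have step3 : c k * Ω k (m * θ j) ≤ Ω k (θ j) := hc k (θ j) ⟨hθj, (hθ j).2⟩
    have step4 : Ω k (θ j) = Ωstar (θ j) := by rw [hΩstar, hk]
    have step5 : Ωstar (θ j) ≤ Ω j (θ j) := by
      rw [hΩstar]; exact ciInf_le (hbdd _) j
    have step6 : ρ j * Ω j (θ j) ≤ ∑ i, ρ i * Ω i (θ i) :=
      Finset.single_le_sum
        (fun i _ => mul_nonneg (hρ i).le (hΩnonneg i _ (hθ i).1)) (Finset.mem_univ j)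
    have hΩjnn : 0 ≤ Ω j (θ j) := hΩnonneg j _ (hθ j).1
    calc ρ i₀ * c j₀ * Ωstar (∑ i, θ i)
        ≤ ρ i₀ * c j₀ * Ωstar (m * θ j) := by
          apply mul_le_mul_of_nonneg_left hstar_mono
          exact (mul_pos (hρ i₀) (hcpos j₀)).le
      _ ≤ ρ i₀ * (c j₀ * Ω k (m * θ j)) := by
          rw [mul_assoc]
          exact mul_le_mul_of_nonneg_left
            (mul_le_mul_of_nonneg_left step1 (hcpos j₀).le) (hρ i₀).le
      _ ≤ ρ i₀ * Ω j (θ j) := by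
          apply mul_le_mul_of_nonneg_left _ (hρ i₀).le
          calc c j₀ * Ω k (m * θ j) ≤ c k * Ω k (m * θ j) := step2
            _ ≤ Ω k (θ j) := step3
            _ = Ωstar (θ j) := step4
            _ ≤ Ω j (θ j) := step5
      _ ≤ ρ j * Ω j (θ j) := mul_le_mul_of_nonneg_right (hi₀ j) hΩjnn
      _ ≤ ∑ i, ρ i * Ω i (θ i) := step6
end

section
/- Let Ω⋆ : [0, ∞) → [0, ∞) be a continuous function with Ω⋆(θ) = 0 if and only if θ = 0. Let S̃ : [0, ∞) → [0, ∞) be a nonincreasing function. Let (t_k)_{k ≥ 1} be a strictly increasing sequence of times with t_k → ∞ and liminf_{k → ∞} (t_{k+1} − t_k) > 0, and suppose that for every k the inequality S̃(t_{k+1}) − S̃(t_k) ≤ −Ω⋆(S̃(t_{k+1})) · (t_{k+1} − t_k) holds. Then S̃(t) → 0 as t → ∞. -/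
open Filter Set

/-- Proposition 8 of the paper. Let `Ω⋆ : [0, ∞) → [0, ∞)` be
continuous with `Ω⋆(θ) = 0` iff `θ = 0`, and let `S̃ : [0, ∞) → [0, ∞)` be nonincreasing.
Let `(t_k)` be strictly increasing with `t_k → ∞` and `liminf (t_{k+1} − t_k) > 0`, and
suppose `S̃(t_{k+1}) − S̃(t_k) ≤ −Ω⋆(S̃(t_{k+1}))(t_{k+1} − t_k)` for all `k`. Then
`S̃(t) → 0` as `t → ∞`. -/
theorem stmt_13 (Ωstar : ℝ → ℝ)
    (hΩcont : ContinuousOn Ωstar (Set.Ici 0))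
    (hΩnonneg : ∀ θ, 0 ≤ θ → 0 ≤ Ωstar θ)
    (hΩzero : ∀ θ, 0 ≤ θ → (Ωstar θ = 0 ↔ θ = 0))
    (S : ℝ → ℝ)
    (hSnonneg : ∀ t, 0 ≤ t → 0 ≤ S t)
    (hSanti : AntitoneOn S (Set.Ici 0))
    (t : ℕ → ℝ) (ht0 : ∀ k, 0 ≤ t k) (htmono : StrictMono t)
    (htinf : Tendsto t atTop atTop)
    (hgap : 0 < Filter.liminf (fun k => t (k + 1) - t k) atTop)
    (hineq : ∀ k, S (t (k + 1)) - S (t k) ≤ -Ωstar (S (t (k + 1))) * (t (k + 1) - t k)) :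
    Tendsto S atTop (nhds 0) := by
  set a : ℕ → ℝ := fun k => S (t k) with ha
  have haanti : Antitone a := fun i j hij =>
    hSanti (ht0 i) (ht0 j) (htmono.monotone hij)
  have hanonneg : ∀ k, 0 ≤ a k := fun k => hSnonneg _ (ht0 k)
  have hbdd : BddBelow (Set.range a) := ⟨0, by rintro x ⟨k, rfl⟩; exact hanonneg k⟩
  have haL : Tendsto a atTop (nhds (⨅ k, a k)) := tendsto_atTop_ciInf haanti hbdd
  set L := ⨅ k, a k with hLdef
  have hL0 : 0 ≤ L := le_ciInf hanonneg
  have hLle : ∀ k, L ≤ a k := fun k => ciInf_le hbdd k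
  have hLzero : L = 0 := by
    by_contra hne
    have hLpos : 0 < L := lt_of_le_of_ne hL0 (Ne.symm hne)
    have hsub : Set.Icc L (a 0) ⊆ Set.Ici (0 : ℝ) := fun x hx => le_trans hL0 hx.1
    have hne' : (Set.Icc L (a 0)).Nonempty := ⟨a 0, hLle 0, le_rfl⟩
    obtain ⟨θ0, hθ0mem, hθ0min⟩ :=
      isCompact_Icc.exists_isMinOn hne' (hΩcont.mono hsub)
    set ε := Ωstar θ0 with hεdef
    have hθ0nonneg : 0 ≤ θ0 := le_trans hL0 hθ0mem.1
    have hεpos : 0 < ε := by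
      rcases (hΩnonneg θ0 hθ0nonneg).lt_or_eq with h | h
      · exact h
      · exfalso
        have hz : θ0 = 0 := (hΩzero θ0 hθ0nonneg).1 h.symm
        have := hθ0mem.1
        linarith
    -- eventual lower bound on the gaps
    have hgaps_bdd : IsBoundedUnder (· ≥ ·) atTop (fun k => t (k + 1) - t k) :=
      ⟨0, by
        rw [Filter.eventually_map]
        exact Filter.Eventually.of_forall fun (k : ℕ) =>
          sub_nonneg.mpr (htmono (Nat.lt_succ_self k)).le⟩
    set δ := Filter.liminf (fun k => t (k + 1) - t k) atTop / 2 with hδdef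
    have hδpos : 0 < δ := by positivity
    have hδlt : δ < Filter.liminf (fun k => t (k + 1) - t k) atTop := by
      rw [hδdef]; linarith
    have hev : ∀ᶠ k in atTop, δ < t (k + 1) - t k :=
      Filter.eventually_lt_of_lt_liminf hδlt hgaps_bdd
    obtain ⟨N, hN⟩ := Filter.eventually_atTop.1 hev
    -- key step inequality
    have hstep : ∀ k, N ≤ k → a (k + 1) ≤ a k - ε * δ := by
      intro k hk
      have hmem : a (k + 1) ∈ Set.Icc L (a 0) := ⟨hLle _, haanti (Nat.zero_le _)⟩
      have hεle : ε ≤ Ωstar (a (k + 1)) := hθ0min hmem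
      have hgapk : δ < t (k + 1) - t k := hN k hk
      have h1 := hineq k
      have h2 : ε * δ ≤ Ωstar (a (k + 1)) * (t (k + 1) - t k) := by
        apply mul_le_mul hεle hgapk.le hδpos.le
        exact le_trans (hΩnonneg θ0 hθ0nonneg) hεle
      nlinarith
    have hiter : ∀ n : ℕ, a (N + n) ≤ a N - n * (ε * δ) := by
      intro n
      induction n with
      | zero => simp
      | succ m ih =>
        have h1 : a (N + (m + 1)) ≤ a (N + m) - ε * δ := hstep (N + m) (Nat.le_add_right _ _)
        push_cast
        push_cast at ih
        nlinarith
    obtain ⟨n, hn⟩ := exists_nat_gt (a N / (ε * δ))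
    have hεδ : 0 < ε * δ := mul_pos hεpos hδpos
    have : a N < n * (ε * δ) := by
      rw [div_lt_iff₀ hεδ] at hn
      exact hn
    have := hiter n
    have := hanonneg (N + n)
    linarith
  rw [hLzero] at haL
  -- now transfer to S along the reals
  rw [Metric.tendsto_atTop]
  intro ε hε
  have : ∀ᶠ k in atTop, a k ∈ Set.Iio ε := haL (Iio_mem_nhds hε)
  obtain ⟨k, hk⟩ := this.exists
  refine ⟨t k, fun x hx => ?_⟩
  have hx0 : (0 : ℝ) ≤ x := le_trans (ht0 k) hx
  have hSx : S x ≤ a k := hSanti (ht0 k) hx0 hx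
  have hSxnn : 0 ≤ S x := hSnonneg x hx0
  rw [Real.dist_eq, sub_zero, abs_of_nonneg hSxnn]
  exact lt_of_le_of_lt hSx hk
end

section
/- Let M ≥ 0, let (t_k)_{k ≥ 1} be a strictly increasing sequence of times with t_k → ∞, and let (S_k) and (G_k) be sequences of real numbers with S_k ≥ 0 for all k, satisfying for every k the inequality S_{k+1} − S_k ≤ −G_k (t_{k+1} − t_k) + (M/2)(t_{k+1} − t_k)². Then: (i) for every ε > 0 there are infinitely many indices N such that G_N < (M/2)(t_{N+1} − t_N) + ε; and (ii) quantitatively, for every ε > 0 and all indices N₁ ≤ N₂ with t_{N₂} ≥ t_{N₁} + S_{N₁}/ε, there exists k ∈ {N₁, N₁+1, …, N₂} such that G_k < (M/2)(t_{k+1} − t_k) + ε. -/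
open Filter

/-- abstract content of Proposition 6 of the paper. Let `M ≥ 0`, let
`(t_k)` be strictly increasing with `t_k → ∞`, and let `(S_k)`, `(G_k)` be real sequences
with `S_k ≥ 0`, satisfying `S_{k+1} − S_k ≤ −G_k (t_{k+1} − t_k) + (M/2)(t_{k+1} − t_k)²`
for all `k`. Then (i) for every `ε > 0` there are infinitely many `N` with
`G_N < (M/2)(t_{N+1} − t_N) + ε`; and (ii) for every `ε > 0` and all `N₁ ≤ N₂` with
`t_{N₂} ≥ t_{N₁} + S_{N₁}/ε`, there exists `k ∈ {N₁, …, N₂}` with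
`G_k < (M/2)(t_{k+1} − t_k) + ε`. -/
theorem stmt_14 (M : ℝ) (hM : 0 ≤ M)
    (t : ℕ → ℝ) (htmono : StrictMono t) (htinf : Tendsto t atTop atTop)
    (S G : ℕ → ℝ) (hS : ∀ k, 0 ≤ S k)
    (hineq : ∀ k, S (k + 1) - S k ≤
      -G k * (t (k + 1) - t k) + (M / 2) * (t (k + 1) - t k) ^ 2) :
    (∀ ε > (0 : ℝ), ∀ N₀ : ℕ, ∃ N, N₀ ≤ N ∧
      G N < (M / 2) * (t (N + 1) - t N) + ε) ∧
    (∀ ε > (0 : ℝ), ∀ N₁ N₂ : ℕ, N₁ ≤ N₂ → t N₁ + S N₁ / ε ≤ t N₂ →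
      ∃ k, N₁ ≤ k ∧ k ≤ N₂ ∧ G k < (M / 2) * (t (k + 1) - t k) + ε) := by
  have key : ∀ ε > (0 : ℝ), ∀ N₁ N₂ : ℕ, N₁ ≤ N₂ → t N₁ + S N₁ / ε ≤ t N₂ →
      ∃ k, N₁ ≤ k ∧ k ≤ N₂ ∧ G k < (M / 2) * (t (k + 1) - t k) + ε := by
    intro ε hε N₁ N₂ h12 ht
    by_contra hcon
    push_neg at hcon
    -- hcon : ∀ k, N₁ ≤ k → k ≤ N₂ → (M/2)*(t(k+1)-t k) + ε ≤ G k
    have step : ∀ k, N₁ ≤ k → k ≤ N₂ →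
        S (k + 1) ≤ S k - ε * (t (k + 1) - t k) := by
      intro k hk1 hk2
      have hΔ : 0 < t (k + 1) - t k := sub_pos.mpr (htmono (Nat.lt_succ_self k))
      have hG := hcon k hk1 hk2
      have := hineq k
      nlinarith [this, mul_le_mul_of_nonneg_right hG (le_of_lt hΔ)]
    have ind : ∀ n, N₁ ≤ n → n ≤ N₂ + 1 →
        S n ≤ S N₁ - ε * (t n - t N₁) := by
      intro n hn
      induction n, hn using Nat.le_induction with
      | base => intro _; simp
      | succ n hn ih =>
        intro hle
        have hn2 : n ≤ N₂ := Nat.lt_succ_iff.mp hle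
        have h1 := ih (le_trans hn2 (Nat.le_succ N₂))
        have h2 := step n hn hn2
        nlinarith
    have hfin := ind (N₂ + 1) (le_trans h12 (Nat.le_succ N₂)) le_rfl
    have ht' : t N₂ < t (N₂ + 1) := htmono (Nat.lt_succ_self N₂)
    have hSd : S N₁ / ε ≤ t N₂ - t N₁ := by linarith
    have : S N₁ ≤ ε * (t N₂ - t N₁) := by
      rw [div_le_iff₀ hε] at hSd; linarith
    have h0 := hS (N₂ + 1)
    nlinarith
  refine ⟨?_, key⟩
  intro ε hε N₀
  obtain ⟨N₂, hN₂⟩ := (htinf.eventually_ge_atTop (t N₀ + S N₀ / ε)).exists_forall_of_atTop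
  obtain ⟨k, hk1, _, hk3⟩ := key ε hε N₀ (max N₀ N₂) (le_max_left _ _)
    (hN₂ _ (le_max_right _ _))
  exact ⟨k, hk1, hk3⟩
end
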